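/- arXiv:1301.3482 — 7 statements merged into one kernel-verified Lean document; each statement's English description precedes it below -/
import Mathlib

section
/- Suppose an MMDC matching between A and B exists. Then the graph G has a perfect matching, i.e., there exists a bijection f : V_S → V_T such that (v, f v) is an allowed edge for every v ∈ V_S. -/
/- The bipartite graph `G` of Rajabi-Alni and Bagheri, for the case
`∑ i, α' i > ∑ j, β j` (compensator set `Y` added to the right side `T`). -/

/-- Left vertex set `V_S`: copies `A_i`, extra copies `A'_i`, dummy sets `X_j`,
dummy sets `W_j`. -/
abbrev VS (s t : ℕ) (α α' : Fin s → ℕ) (β β' : Fin t → ℕ) : Type :=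
  ((i : Fin s) × Fin (α i)) ⊕ ((i : Fin s) × Fin (α' i - α i)) ⊕
    ((j : Fin t) × Fin (β' j - β j)) ⊕ ((j : Fin t) × Fin (s - β' j))

/-- Right vertex set `V_T`: the vertices `b_{j,i}` together with the compensator set `Y`. -/
abbrev VT (s t : ℕ) (α' : Fin s → ℕ) (β : Fin t → ℕ) : Type :=
  (Fin t × Fin s) ⊕ Fin (∑ i, α' i - ∑ j, β j)

variable {s t : ℕ}

/-- The allowed edges of `G`. -/
def Allowed (α α' : Fin s → ℕ) (β β' : Fin t → ℕ) :
    VS s t α α' β β' → VT s t α' β → Prop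
  | Sum.inl ⟨i, _⟩, Sum.inl (_, i') => i' = i            -- A_i-copy to b_{j,i}
  | Sum.inl _, Sum.inr _ => False
  | Sum.inr (Sum.inl ⟨i, _⟩), Sum.inl (_, i') => i' = i  -- A'_i-copy to b_{j,i}
  | Sum.inr (Sum.inl _), Sum.inr _ => True               -- A'_i-copy to Y
  | Sum.inr (Sum.inr (Sum.inl ⟨j, _⟩)), Sum.inl (j', _) => j' = j  -- X_j to b_{j,i}
  | Sum.inr (Sum.inr (Sum.inl _)), Sum.inr _ => True     -- X_j to Y
  | Sum.inr (Sum.inr (Sum.inr ⟨j, _⟩)), Sum.inl (j', _) => j' = j  -- W_j to b_{j,i}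
  | Sum.inr (Sum.inr (Sum.inr _)), Sum.inr _ => False

/-- The weights of the edges of `G`. -/
def weight (δ : Fin s → Fin t → ℝ) (γ' γ'' : ℝ) (α α' : Fin s → ℕ) (β β' : Fin t → ℕ) :
    VS s t α α' β β' → VT s t α' β → ℝ
  | Sum.inl ⟨i, _⟩, Sum.inl (j, _) => δ i j
  | Sum.inl _, Sum.inr _ => 0
  | Sum.inr (Sum.inl ⟨i, _⟩), Sum.inl (j, _) => δ i j
  | Sum.inr (Sum.inl _), Sum.inr _ => 0
  | Sum.inr (Sum.inr (Sum.inl _)), Sum.inl _ => γ'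
  | Sum.inr (Sum.inr (Sum.inl _)), Sum.inr _ => γ''
  | Sum.inr (Sum.inr (Sum.inr _)), _ => 0

/-- A perfect matching of `G`: a bijection `f : V_S → V_T` such that `(v, f v)` is an
allowed edge for every `v`. -/
def IsPerfectMatching (α α' : Fin s → ℕ) (β β' : Fin t → ℕ)
    (f : VS s t α α' β β' ≃ VT s t α' β) : Prop :=
  ∀ v, Allowed α α' β β' v (f v)

/-- Total weight of a perfect matching of `G`. -/
def totalWeight (δ : Fin s → Fin t → ℝ) (γ' γ'' : ℝ) (α α' : Fin s → ℕ) (β β' : Fin t → ℕ)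
    (f : VS s t α α' β β' ≃ VT s t α' β) : ℝ :=
  ∑ v, weight δ γ' γ'' α α' β β' v (f v)

/-- Main weight of a perfect matching of `G`: the sum of `δ i j` over those `v` in the
`A_i`'s and `A'_i`'s with `f v = b_{j,i}`. -/
def mainWeight (δ : Fin s → Fin t → ℝ) (α α' : Fin s → ℕ) (β β' : Fin t → ℕ)
    (f : VS s t α α' β β' ≃ VT s t α' β) : ℝ :=
  (∑ v : (i : Fin s) × Fin (α i),
    match f (Sum.inl v) with
    | Sum.inl (j, i') => if i' = v.1 then δ v.1 j else 0
    | Sum.inr _ => 0) +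
  (∑ v : (i : Fin s) × Fin (α' i - α i),
    match f (Sum.inr (Sum.inl v)) with
    | Sum.inl (j, i') => if i' = v.1 then δ v.1 j else 0
    | Sum.inr _ => 0)

/-- An MMDC matching between `A` and `B`: each `aᵢ` is matched to at least `α i` and at
most `α' i` points of `B`, and each `bⱼ` is matched to at least `β j` and at most `β' j`
points of `A`. -/
def IsMMDC {s t : ℕ} (α α' : Fin s → ℕ) (β β' : Fin t → ℕ)
    (L : Finset (Fin s × Fin t)) : Prop :=
  (∀ i, α i ≤ (L.filter fun p => p.1 = i).card ∧ (L.filter fun p => p.1 = i).card ≤ α' i) ∧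
  (∀ j, β j ≤ (L.filter fun p => p.2 = j).card ∧ (L.filter fun p => p.2 = j).card ≤ β' j)

/-- The cost of an MMDC matching. -/
def cost {s t : ℕ} (δ : Fin s → Fin t → ℝ) (L : Finset (Fin s × Fin t)) : ℝ :=
  ∑ p ∈ L, δ p.1 p.2

lemma aux_L1 {a b n k : ℕ} (h : a ≤ n) (hcard : a + b = n + k) :
    ∃ e : Fin a ⊕ Fin b ≃ Fin n ⊕ Fin k, ∀ x : Fin a, ∃ y, e (Sum.inl x) = Sum.inl y := by
  refine ⟨finSumFinEquiv.trans ((finCongr hcard).trans finSumFinEquiv.symm), fun x => ?_⟩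
  have hx : (x : ℕ) < n := lt_of_lt_of_le x.isLt h
  refine ⟨⟨x, hx⟩, ?_⟩
  have h1 : (finCongr hcard) (finSumFinEquiv (Sum.inl x)) = Fin.castAdd k ⟨x, hx⟩ := by
    ext; simp
  rw [Equiv.trans_apply, Equiv.trans_apply, h1, finSumFinEquiv_symm_apply_castAdd]

lemma aux_L2 {a b n k : ℕ} (h : b ≤ n) (hcard : a + b = n + k) :
    ∃ e : Fin a ⊕ Fin b ≃ Fin n ⊕ Fin k, ∀ x : Fin b, ∃ y, e (Sum.inr x) = Sum.inl y := by
  obtain ⟨e, he⟩ := aux_L1 h (by omega : b + a = n + k)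
  exact ⟨(Equiv.sumComm _ _).trans e, fun x => he x⟩

def gFun {s t : ℕ} (P : Fin s → Fin t → Prop) (u : Fin s → ℕ) (v : Fin t → ℕ) (N : ℕ)
    (E : (((i : Fin s) × Fin (u i)) ⊕ ((j : Fin t) × Fin (v j))) ≃ Fin N) :
    (((i : Fin s) × ({j // P i j} ⊕ Fin (u i))) ⊕ ((j : Fin t) × ({i // ¬ P i j} ⊕ Fin (v j)))) →
      (Fin t × Fin s) ⊕ Fin N
  | .inl ⟨i, .inl j⟩ => .inl (j.1, i)
  | .inl ⟨i, .inr y⟩ => .inr (E (.inl ⟨i, y⟩))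
  | .inr ⟨j, .inl i⟩ => .inl (j, i.1)
  | .inr ⟨j, .inr y⟩ => .inr (E (.inr ⟨j, y⟩))

theorem gFun_bijective {s t : ℕ} (P : Fin s → Fin t → Prop) (u : Fin s → ℕ) (v : Fin t → ℕ)
    (N : ℕ) (E : (((i : Fin s) × Fin (u i)) ⊕ ((j : Fin t) × Fin (v j))) ≃ Fin N) :
    Function.Bijective (gFun P u v N E) := by
  constructor
  · rintro (⟨i, x | y⟩ | ⟨j, x | y⟩) (⟨i', x' | y'⟩ | ⟨j', x' | y'⟩) h <;>
      simp only [gFun, Sum.inl.injEq, Sum.inr.injEq, Prod.mk.injEq,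
        EmbeddingLike.apply_eq_iff_eq, Sigma.ext_iff, reduceCtorEq] at h
    · obtain ⟨h1, rfl⟩ := h; rw [show x = x' from Subtype.ext h1]
    · exact absurd (h.1 ▸ h.2 ▸ x.2) x'.2
    · obtain ⟨rfl, h2⟩ := h; rw [eq_of_heq h2]
    · exact absurd (h.2 ▸ h.1 ▸ x'.2) x.2
    · obtain ⟨rfl, h1⟩ := h; rw [show x = x' from Subtype.ext h1]
    · obtain ⟨rfl, h2⟩ := h; rw [eq_of_heq h2]
  · rintro ((⟨j, i⟩) | y)
    · by_cases hP : P i j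
      · exact ⟨.inl ⟨i, .inl ⟨j, hP⟩⟩, rfl⟩
      · exact ⟨.inr ⟨j, .inl ⟨i, hP⟩⟩, rfl⟩
    · obtain ⟨z, hz⟩ := E.surjective y
      rcases z with ⟨i, w⟩ | ⟨j, w⟩
      · exact ⟨.inl ⟨i, .inr w⟩, by simp [gFun, hz]⟩
      · exact ⟨.inr ⟨j, .inr w⟩, by simp [gFun, hz]⟩

def regroup (α α' : Fin s → ℕ) (β β' : Fin t → ℕ) :
    VS s t α α' β β' ≃
      (((i : Fin s) × (Fin (α i) ⊕ Fin (α' i - α i))) ⊕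
        ((j : Fin t) × (Fin (β' j - β j) ⊕ Fin (s - β' j)))) where
  toFun v := match v with
    | .inl ⟨i, x⟩ => .inl ⟨i, .inl x⟩
    | .inr (.inl ⟨i, x⟩) => .inl ⟨i, .inr x⟩
    | .inr (.inr (.inl ⟨j, x⟩)) => .inr ⟨j, .inl x⟩
    | .inr (.inr (.inr ⟨j, x⟩)) => .inr ⟨j, .inr x⟩
  invFun v := match v with
    | .inl ⟨i, .inl x⟩ => .inl ⟨i, x⟩
    | .inl ⟨i, .inr x⟩ => .inr (.inl ⟨i, x⟩)
    | .inr ⟨j, .inl x⟩ => .inr (.inr (.inl ⟨j, x⟩))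
    | .inr ⟨j, .inr x⟩ => .inr (.inr (.inr ⟨j, x⟩))
  left_inv := by rintro (⟨i, x⟩ | ⟨i, x⟩ | ⟨j, x⟩ | ⟨j, x⟩) <;> rfl
  right_inv := by rintro (⟨i, x | x⟩ | ⟨j, x | x⟩) <;> rfl


/-- If an MMDC matching between `A` and `B` exists, then `G` has a
perfect matching. -/
theorem exists_perfectMatching_of_exists_MMDC
    (s t : ℕ) (hs : 0 < s) (ht : 0 < t)
    (δ : Fin s → Fin t → ℝ) (α α' : Fin s → ℕ) (β β' : Fin t → ℕ)
    (hαα' : ∀ i, α i ≤ α' i) (hα't : ∀ i, α' i ≤ t)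
    (hββ' : ∀ j, β j ≤ β' j) (hβ's : ∀ j, β' j ≤ s)
    (hbal : ∑ j, β j < ∑ i, α' i)
    (γ' γ'' : ℝ) (hγ : γ' < γ'') (hγδ : ∀ i j, γ'' < δ i j)
    (hL : ∃ L, IsMMDC α α' β β' L) :
    ∃ f : VS s t α α' β β' ≃ VT s t α' β, IsPerfectMatching α α' β β' f := by
  classical
  obtain ⟨L, hLA, hLB⟩ := hL
  -- cardinalities of the fibers
  have cardA : ∀ i : Fin s, Fintype.card {j : Fin t // (i, j) ∈ L}
      = (L.filter fun p => p.1 = i).card := by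
    intro i
    rw [Fintype.card_subtype]
    apply Finset.card_bij' (fun j _ => (i, j)) (fun p _ => p.2) <;>
      simp +contextual [Finset.mem_filter]
    rintro p q hpq rfl; exact hpq
  have cardBin : ∀ j : Fin t, Fintype.card {i : Fin s // (i, j) ∈ L}
      = (L.filter fun p => p.2 = j).card := by
    intro j
    rw [Fintype.card_subtype]
    apply Finset.card_bij' (fun i _ => (i, j)) (fun p _ => p.1) <;>
      simp +contextual [Finset.mem_filter]
    rintro p q hpq rfl; exact hpq
  have cardB : ∀ j : Fin t, Fintype.card {i : Fin s // (i, j) ∉ L}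
      = s - (L.filter fun p => p.2 = j).card := by
    intro j
    rw [Fintype.card_subtype_compl, Fintype.card_fin, cardBin j]
  have hsum1 : ∑ i, (L.filter fun p => p.1 = i).card = L.card :=
    (Finset.card_eq_sum_card_fiberwise (fun p _ => Finset.mem_univ p.1)).symm
  have hsum2 : ∑ j, (L.filter fun p => p.2 = j).card = L.card :=
    (Finset.card_eq_sum_card_fiberwise (fun p _ => Finset.mem_univ p.2)).symm
  -- the left-side block equivalences
  choose eA heA using fun i : Fin s =>
    aux_L1 (a := α i) (b := α' i - α i) (n := Fintype.card {j : Fin t // (i, j) ∈ L})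
      (k := α' i - Fintype.card {j : Fin t // (i, j) ∈ L})
      (by have := (hLA i).1; have := cardA i; omega)
      (by have := (hLA i).1; have := (hLA i).2; have := cardA i; have := hαα' i; omega)
  choose eB heB using fun j : Fin t =>
    aux_L2 (a := β' j - β j) (b := s - β' j) (n := Fintype.card {i : Fin s // (i, j) ∉ L})
      (k := (L.filter fun p => p.2 = j).card - β j)
      (by have := (hLB j).2; have := cardB j; omega)
      (by have := (hLB j).1; have := (hLB j).2; have := cardB j; have := hββ' j;
          have := hβ's j; omega)
  -- the compensator-set equivalence
  have Ecard : Fintype.card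
      (((i : Fin s) × Fin (α' i - Fintype.card {j : Fin t // (i, j) ∈ L})) ⊕
        ((j : Fin t) × Fin ((L.filter fun p => p.2 = j).card - β j)))
      = Fintype.card (Fin (∑ i, α' i - ∑ j, β j)) := by
    simp only [Fintype.card_sum, Fintype.card_sigma, Fintype.card_fin]
    have h1 : ∑ i, (α' i - Fintype.card {j : Fin t // (i, j) ∈ L})
        + ∑ i, Fintype.card {j : Fin t // (i, j) ∈ L} = ∑ i, α' i := by
      rw [← Finset.sum_add_distrib]
      refine Finset.sum_congr rfl fun i _ => ?_
      have := (hLA i).2; have := cardA i; omega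
    have h2 : ∑ j, ((L.filter fun p => p.2 = j).card - β j) + ∑ j, β j
        = ∑ j, (L.filter fun p => p.2 = j).card := by
      rw [← Finset.sum_add_distrib]
      refine Finset.sum_congr rfl fun j _ => ?_
      have := (hLB j).1; omega
    have h3 : ∑ i, Fintype.card {j : Fin t // (i, j) ∈ L}
        = ∑ i, (L.filter fun p => p.1 = i).card :=
      Finset.sum_congr rfl fun i _ => cardA i
    omega
  let E := Fintype.equivOfCardEq Ecard
  -- assemble the bijection
  refine ⟨(regroup α α' β β').trans
    ((Equiv.sumCongr
      (Equiv.sigmaCongrRight fun i =>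
        (eA i).trans (Equiv.sumCongr (Fintype.equivFin {j : Fin t // (i, j) ∈ L}).symm
          (Equiv.refl _)))
      (Equiv.sigmaCongrRight fun j =>
        (eB j).trans (Equiv.sumCongr (Fintype.equivFin {i : Fin s // (i, j) ∉ L}).symm
          (Equiv.refl _)))).trans
      (Equiv.ofBijective _ (gFun_bijective (fun i j => (i, j) ∈ L) _ _ _ E))), ?_⟩
  rintro (⟨i, x⟩ | ⟨i, x⟩ | ⟨j, x⟩ | ⟨j, x⟩)
  · obtain ⟨y, hy⟩ := heA i x
    simp only [Equiv.trans_apply, regroup, Equiv.coe_fn_mk, Equiv.sumCongr_apply,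
      Equiv.sigmaCongrRight_apply, Sum.map_inl, Equiv.ofBijective_apply, hy]
    exact rfl
  · rcases h : eA i (Sum.inr x) with y | y <;>
      simp only [Equiv.trans_apply, regroup, Equiv.coe_fn_mk, Equiv.sumCongr_apply,
        Equiv.sigmaCongrRight_apply, Sum.map_inl, Sum.map_inr, Equiv.ofBijective_apply, h] <;>
      first | exact trivial | exact rfl
  · rcases h : eB j (Sum.inl x) with y | y <;>
      simp only [Equiv.trans_apply, regroup, Equiv.coe_fn_mk, Equiv.sumCongr_apply,
        Equiv.sigmaCongrRight_apply, Sum.map_inl, Sum.map_inr, Equiv.ofBijective_apply, h] <;>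
      first | exact trivial | exact rfl
  · obtain ⟨y, hy⟩ := heB j x
    simp only [Equiv.trans_apply, regroup, Equiv.coe_fn_mk, Equiv.sumCongr_apply,
      Equiv.sigmaCongrRight_apply, Sum.map_inr, Equiv.ofBijective_apply, hy]
    exact rfl
end

section
/- For every MMDC matching L between A and B, there exists a perfect matching f of the graph G whose main weight equals the cost of L, i.e., w_main(f) = c(L). -/
variable {s t : ℕ}

namespace MMDCAux

variable {s t : ℕ}

def dd (L : Finset (Fin s × Fin t)) (i : Fin s) : ℕ := (L.filter fun p => p.1 = i).card
def ee (L : Finset (Fin s × Fin t)) (j : Fin t) : ℕ := (L.filter fun p => p.2 = j).card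
def Si (L : Finset (Fin s × Fin t)) (i : Fin s) : Finset (Fin t) :=
  Finset.univ.filter fun j => (i, j) ∈ L
def Tj (L : Finset (Fin s × Fin t)) (j : Fin t) : Finset (Fin s) :=
  Finset.univ.filter fun i => (i, j) ∈ L

lemma filter_fst (L : Finset (Fin s × Fin t)) (i : Fin s) :
    L.filter (fun p => p.1 = i) =
      (Si L i).map ⟨fun j => (i, j), fun a b h => by simpa using h⟩ := by
  ext p
  simp only [Finset.mem_filter, Finset.mem_map, Si, Function.Embedding.coeFn_mk,
    Finset.mem_univ, true_and]
  constructor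
  · rintro ⟨hp, rfl⟩
    exact ⟨p.2, by simpa using hp, rfl⟩
  · rintro ⟨j, hj, rfl⟩
    exact ⟨hj, rfl⟩

lemma filter_snd (L : Finset (Fin s × Fin t)) (j : Fin t) :
    L.filter (fun p => p.2 = j) =
      (Tj L j).map ⟨fun i => (i, j), fun a b h => by simpa using h⟩ := by
  ext p
  simp only [Finset.mem_filter, Finset.mem_map, Tj, Function.Embedding.coeFn_mk,
    Finset.mem_univ, true_and]
  constructor
  · rintro ⟨hp, rfl⟩
    exact ⟨p.1, by simpa using hp, rfl⟩
  · rintro ⟨i, hi, rfl⟩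
    exact ⟨hi, rfl⟩

lemma card_Si (L : Finset (Fin s × Fin t)) (i : Fin s) : (Si L i).card = dd L i := by
  rw [dd, filter_fst, Finset.card_map]

lemma card_Tj (L : Finset (Fin s × Fin t)) (j : Fin t) : (Tj L j).card = ee L j := by
  rw [ee, filter_snd, Finset.card_map]

lemma ee_le (L : Finset (Fin s × Fin t)) (j : Fin t) : ee L j ≤ s := by
  rw [← card_Tj]
  simpa using Finset.card_le_card (Finset.subset_univ (Tj L j))

noncomputable def eqSi (L : Finset (Fin s × Fin t)) (i : Fin s) :
    Fin (dd L i) ≃ {x // x ∈ Si L i} :=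
  (Finset.equivFinOfCardEq (card_Si L i)).symm

noncomputable def eqTc (L : Finset (Fin s × Fin t)) (j : Fin t) :
    Fin (s - ee L j) ≃ {x // x ∈ (Tj L j)ᶜ} :=
  (Finset.equivFinOfCardEq (by
    rw [Finset.card_compl, card_Tj]; simp)).symm

lemma mem_Si (L : Finset (Fin s × Fin t)) (i : Fin s) (m : Fin (dd L i)) :
    (i, (eqSi L i m : Fin t)) ∈ L := by
  have h2 := (eqSi L i m).2
  exact (Finset.mem_filter.mp h2).2

lemma not_mem_Tc (L : Finset (Fin s × Fin t)) (j : Fin t) (m : Fin (s - ee L j)) :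
    ((eqTc L j m : Fin s), j) ∉ L := by
  have h2 := (eqTc L j m).2
  intro hmem
  exact (Finset.mem_compl.mp h2) (Finset.mem_filter.mpr ⟨Finset.mem_univ _, hmem⟩)

/-- Splitting equivalence between two decompositions of the same interval. -/
def splitEquiv {a b c d : ℕ} (h : a + b = c + d) : Fin a ⊕ Fin b ≃ Fin c ⊕ Fin d :=
  finSumFinEquiv.trans ((finCongr h).trans finSumFinEquiv.symm)

lemma splitEquiv_inl {a b c d : ℕ} (h : a + b = c + d) (k : Fin a) (hk : (k : ℕ) < c) :
    splitEquiv h (Sum.inl k) = Sum.inl ⟨k, hk⟩ := by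
  rw [splitEquiv, Equiv.trans_apply, Equiv.trans_apply, Equiv.symm_apply_eq]
  apply Fin.ext
  simp

lemma splitEquiv_inr {a b c d : ℕ} (h : a + b = c + d) (k : Fin b) (hk : c ≤ a) :
    splitEquiv h (Sum.inr k) = Sum.inr ⟨a + (k : ℕ) - c, by omega⟩ := by
  rw [splitEquiv, Equiv.trans_apply, Equiv.trans_apply, Equiv.symm_apply_eq]
  apply Fin.ext
  have hk' : (k : ℕ) < b := k.2
  simp [Fin.natAdd]
  omega

lemma sum_dd (L : Finset (Fin s × Fin t)) : ∑ i, dd L i = L.card :=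
  (Finset.card_eq_sum_card_fiberwise (fun p _ => Finset.mem_univ p.1)).symm

lemma sum_ee (L : Finset (Fin s × Fin t)) : ∑ j, ee L j = L.card :=
  (Finset.card_eq_sum_card_fiberwise (fun p _ => Finset.mem_univ p.2)).symm


noncomputable def endFun (L : Finset (Fin s × Fin t)) (α' : Fin s → ℕ) (β : Fin t → ℕ) (N : ℕ)
    (Y : ((i : Fin s) × Fin (α' i - dd L i)) ⊕ ((j : Fin t) × Fin (ee L j - β j)) ≃ Fin N) :
    (((i : Fin s) × (Fin (dd L i) ⊕ Fin (α' i - dd L i))) ⊕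
      ((j : Fin t) × (Fin (ee L j - β j) ⊕ Fin (s - ee L j)))) → (Fin t × Fin s) ⊕ Fin N
  | Sum.inl ⟨i, Sum.inl m⟩ => Sum.inl ((eqSi L i m : Fin t), i)
  | Sum.inl ⟨i, Sum.inr m⟩ => Sum.inr (Y (Sum.inl ⟨i, m⟩))
  | Sum.inr ⟨j, Sum.inl m⟩ => Sum.inr (Y (Sum.inr ⟨j, m⟩))
  | Sum.inr ⟨j, Sum.inr m⟩ => Sum.inl (j, (eqTc L j m : Fin s))

lemma endFun_injective (L : Finset (Fin s × Fin t)) (α' : Fin s → ℕ) (β : Fin t → ℕ) (N : ℕ)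
    (Y : ((i : Fin s) × Fin (α' i - dd L i)) ⊕ ((j : Fin t) × Fin (ee L j - β j)) ≃ Fin N) :
    Function.Injective (endFun L α' β N Y) := by
  rintro (⟨i1, m1 | m1⟩ | ⟨j1, m1 | m1⟩) (⟨i2, m2 | m2⟩ | ⟨j2, m2 | m2⟩) h <;>
    simp only [endFun, Sum.inl.injEq, Sum.inr.injEq, Prod.mk.injEq, reduceCtorEq,
      EmbeddingLike.apply_eq_iff_eq, Sigma.mk.inj_iff] at h
  · -- (i1, inl) vs (i2, inl)
    obtain ⟨h1, rfl⟩ := h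
    have h2 : m1 = m2 := (eqSi L i1).injective (Subtype.ext h1)
    rw [h2]
  · -- (i1, inl) vs (j2, inr)
    obtain ⟨rfl, h2⟩ := h
    exact absurd (h2 ▸ mem_Si L i1 m1) (not_mem_Tc L _ m2)
  · -- (i1, inr) vs (i2, inr)
    obtain ⟨rfl, h3⟩ := h
    rw [eq_of_heq h3]
  · -- (j1, inl) vs (j2, inl)
    obtain ⟨rfl, h3⟩ := h
    rw [eq_of_heq h3]
  · -- (j1, inr) vs (i2, inl)
    obtain ⟨h1, h2⟩ := h
    have hm := mem_Si L i2 m2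
    rw [← h1, ← h2] at hm
    exact absurd hm (not_mem_Tc L j1 m1)
  · -- (j1, inr) vs (j2, inr)
    obtain ⟨rfl, h2⟩ := h
    have h3 : m1 = m2 := (eqTc L j1).injective (Subtype.ext h2)
    rw [h3]

def rearr (α α' : Fin s → ℕ) (β β' : Fin t → ℕ) :
    VS s t α α' β β' ≃
      (((i : Fin s) × (Fin (α i) ⊕ Fin (α' i - α i))) ⊕
        ((j : Fin t) × (Fin (β' j - β j) ⊕ Fin (s - β' j)))) where
  toFun v :=
    match v with
    | Sum.inl ⟨i, k⟩ => Sum.inl ⟨i, Sum.inl k⟩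
    | Sum.inr (Sum.inl ⟨i, k⟩) => Sum.inl ⟨i, Sum.inr k⟩
    | Sum.inr (Sum.inr (Sum.inl ⟨j, k⟩)) => Sum.inr ⟨j, Sum.inl k⟩
    | Sum.inr (Sum.inr (Sum.inr ⟨j, k⟩)) => Sum.inr ⟨j, Sum.inr k⟩
  invFun v :=
    match v with
    | Sum.inl ⟨i, Sum.inl k⟩ => Sum.inl ⟨i, k⟩
    | Sum.inl ⟨i, Sum.inr k⟩ => Sum.inr (Sum.inl ⟨i, k⟩)
    | Sum.inr ⟨j, Sum.inl k⟩ => Sum.inr (Sum.inr (Sum.inl ⟨j, k⟩))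
    | Sum.inr ⟨j, Sum.inr k⟩ => Sum.inr (Sum.inr (Sum.inr ⟨j, k⟩))
  left_inv v := by
    rcases v with ⟨i, k⟩ | (⟨i, k⟩ | (⟨j, k⟩ | ⟨j, k⟩)) <;> rfl
  right_inv v := by
    rcases v with ⟨i, k | k⟩ | ⟨j, k | k⟩ <;> rfl

end MMDCAux

/-- For every MMDC matching `L` there is a perfect matching `f` of `G`
with `w_main(f) = c(L)`. -/
theorem exists_perfectMatching_mainWeight_eq_cost
    (s t : ℕ) (hs : 0 < s) (ht : 0 < t)
    (δ : Fin s → Fin t → ℝ) (α α' : Fin s → ℕ) (β β' : Fin t → ℕ)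
    (hαα' : ∀ i, α i ≤ α' i) (hα't : ∀ i, α' i ≤ t)
    (hββ' : ∀ j, β j ≤ β' j) (hβ's : ∀ j, β' j ≤ s)
    (hbal : ∑ j, β j < ∑ i, α' i)
    (γ' γ'' : ℝ) (hγ : γ' < γ'') (hγδ : ∀ i j, γ'' < δ i j)
    (L : Finset (Fin s × Fin t)) (hL : IsMMDC α α' β β' L) :
    ∃ f : VS s t α α' β β' ≃ VT s t α' β,
      IsPerfectMatching α α' β β' f ∧ mainWeight δ α α' β β' f = cost δ L := by
  classical
  obtain ⟨hA, hB⟩ := hL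
  have hd1 : ∀ i, α i ≤ MMDCAux.dd L i := fun i => (hA i).1
  have hd2 : ∀ i, MMDCAux.dd L i ≤ α' i := fun i => (hA i).2
  have he1 : ∀ j, β j ≤ MMDCAux.ee L j := fun j => (hB j).1
  have he2 : ∀ j, MMDCAux.ee L j ≤ β' j := fun j => (hB j).2
  have hCi : ∀ i : Fin s, α i + (α' i - α i) = MMDCAux.dd L i + (α' i - MMDCAux.dd L i) :=
    fun i => by have := hd1 i; have := hd2 i; have := hαα' i; omega
  have hCj : ∀ j : Fin t,
      (β' j - β j) + (s - β' j) = (MMDCAux.ee L j - β j) + (s - MMDCAux.ee L j) :=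
    fun j => by have := he1 j; have := he2 j; have := hββ' j; have := hβ's j; omega
  have hsum1 : ∑ i, (α' i - MMDCAux.dd L i) + ∑ i, MMDCAux.dd L i = ∑ i, α' i := by
    rw [← Finset.sum_add_distrib]
    exact Finset.sum_congr rfl fun i _ => Nat.sub_add_cancel (hd2 i)
  have hsum2 : ∑ j, (MMDCAux.ee L j - β j) + ∑ j, β j = ∑ j, MMDCAux.ee L j := by
    rw [← Finset.sum_add_distrib]
    exact Finset.sum_congr rfl fun j _ => Nat.sub_add_cancel (he1 j)
  have hsum3 := MMDCAux.sum_dd L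
  have hsum4 := MMDCAux.sum_ee L
  have hcardY : Fintype.card (((i : Fin s) × Fin (α' i - MMDCAux.dd L i)) ⊕
      ((j : Fin t) × Fin (MMDCAux.ee L j - β j))) = ∑ i, α' i - ∑ j, β j := by
    simp only [Fintype.card_sum, Fintype.card_sigma, Fintype.card_fin]
    omega
  let Y := Fintype.equivFinOfCardEq hcardY
  have hbij : Function.Bijective (MMDCAux.endFun L α' β _ Y) := by
    rw [Fintype.bijective_iff_injective_and_card]
    refine ⟨MMDCAux.endFun_injective L α' β _ Y, ?_⟩
    simp only [Fintype.card_sum, Fintype.card_sigma, Fintype.card_fin, Fintype.card_prod]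
    have h6 : ∑ i, (MMDCAux.dd L i + (α' i - MMDCAux.dd L i)) = ∑ i, α' i :=
      Finset.sum_congr rfl fun i _ => by have := hd2 i; omega
    have h7 : ∑ j, ((MMDCAux.ee L j - β j) + (s - MMDCAux.ee L j)) = ∑ j, (s - β j) :=
      Finset.sum_congr rfl fun j _ => by
        have := he1 j; have := he2 j; have := hβ's j; omega
    have h8 : ∑ j, (s - β j) + ∑ j, β j = t * s := by
      rw [← Finset.sum_add_distrib]
      have h9 : ∑ j : Fin t, ((s - β j) + β j) = ∑ _j : Fin t, s :=
        Finset.sum_congr rfl fun j _ => by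
          have := hββ' j; have := hβ's j; omega
      rw [h9, Finset.sum_const, Finset.card_univ, Fintype.card_fin, smul_eq_mul]
    rw [h6, h7]
    omega
  let E : VS s t α α' β β' ≃ VT s t α' β :=
    (MMDCAux.rearr α α' β β').trans
      ((Equiv.sumCongr (Equiv.sigmaCongrRight fun i => MMDCAux.splitEquiv (hCi i))
          (Equiv.sigmaCongrRight fun j => MMDCAux.splitEquiv (hCj j))).trans
        (Equiv.ofBijective _ hbij))
  have hEA : ∀ (i : Fin s) (k : Fin (α i)),
      E (Sum.inl ⟨i, k⟩) =
        MMDCAux.endFun L α' β _ Y (Sum.inl ⟨i, MMDCAux.splitEquiv (hCi i) (Sum.inl k)⟩) :=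
    fun i k => rfl
  have hEA' : ∀ (i : Fin s) (k : Fin (α' i - α i)),
      E (Sum.inr (Sum.inl ⟨i, k⟩)) =
        MMDCAux.endFun L α' β _ Y (Sum.inl ⟨i, MMDCAux.splitEquiv (hCi i) (Sum.inr k)⟩) :=
    fun i k => rfl
  have hEX : ∀ (j : Fin t) (k : Fin (β' j - β j)),
      E (Sum.inr (Sum.inr (Sum.inl ⟨j, k⟩))) =
        MMDCAux.endFun L α' β _ Y (Sum.inr ⟨j, MMDCAux.splitEquiv (hCj j) (Sum.inl k)⟩) :=
    fun j k => rfl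
  have hEW : ∀ (j : Fin t) (k : Fin (s - β' j)),
      E (Sum.inr (Sum.inr (Sum.inr ⟨j, k⟩))) =
        MMDCAux.endFun L α' β _ Y (Sum.inr ⟨j, MMDCAux.splitEquiv (hCj j) (Sum.inr k)⟩) :=
    fun j k => rfl
  refine ⟨E, ?_, ?_⟩
  · intro v
    rcases v with ⟨i, k⟩ | (⟨i, k⟩ | (⟨j, k⟩ | ⟨j, k⟩))
    · rw [hEA i k, MMDCAux.splitEquiv_inl (hCi i) k (lt_of_lt_of_le k.2 (hd1 i))]
      exact rfl
    · rcases hc : MMDCAux.splitEquiv (hCi i) (Sum.inr k) with m | m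
      · rw [hEA' i k, hc]; exact rfl
      · rw [hEA' i k, hc]; exact trivial
    · rcases hc : MMDCAux.splitEquiv (hCj j) (Sum.inl k) with m | m
      · rw [hEX j k, hc]; exact trivial
      · rw [hEX j k, hc]; exact rfl
    · rw [hEW j k, MMDCAux.splitEquiv_inr (hCj j) k (by have := he2 j; omega)]
      exact rfl
  · have t3 : cost δ L = ∑ i, ∑ j ∈ MMDCAux.Si L i, δ i j := by
      rw [cost, ← Finset.sum_fiberwise_of_maps_to (g := Prod.fst)
        (fun p _ => Finset.mem_univ p.1)]
      refine Finset.sum_congr rfl fun i _ => ?_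
      rw [MMDCAux.filter_fst, Finset.sum_map]
      rfl
    have t1 : (∑ v : (i : Fin s) × Fin (α i),
        match E (Sum.inl v) with
        | Sum.inl (j, i') => if i' = v.1 then δ v.1 j else 0
        | Sum.inr _ => 0) =
        ∑ i, ∑ k : Fin (α i),
          Sum.elim (fun m : Fin (MMDCAux.dd L i) => δ i ((MMDCAux.eqSi L i m : Fin t)))
            (fun _ => (0 : ℝ)) (MMDCAux.splitEquiv (hCi i) (Sum.inl k)) := by
      rw [← Finset.univ_sigma_univ, Finset.sum_sigma]
      refine Finset.sum_congr rfl fun i _ => Finset.sum_congr rfl fun k _ => ?_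
      rw [hEA i k]
      rcases hc : MMDCAux.splitEquiv (hCi i) (Sum.inl k) with m | m <;>
        simp [MMDCAux.endFun]
    have t2 : (∑ v : (i : Fin s) × Fin (α' i - α i),
        match E (Sum.inr (Sum.inl v)) with
        | Sum.inl (j, i') => if i' = v.1 then δ v.1 j else 0
        | Sum.inr _ => 0) =
        ∑ i, ∑ k : Fin (α' i - α i),
          Sum.elim (fun m : Fin (MMDCAux.dd L i) => δ i ((MMDCAux.eqSi L i m : Fin t)))
            (fun _ => (0 : ℝ)) (MMDCAux.splitEquiv (hCi i) (Sum.inr k)) := by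
      rw [← Finset.univ_sigma_univ, Finset.sum_sigma]
      refine Finset.sum_congr rfl fun i _ => Finset.sum_congr rfl fun k _ => ?_
      rw [hEA' i k]
      rcases hc : MMDCAux.splitEquiv (hCi i) (Sum.inr k) with m | m <;>
        simp [MMDCAux.endFun]
    rw [mainWeight, t1, t2, t3, ← Finset.sum_add_distrib]
    refine Finset.sum_congr rfl fun i _ => ?_
    have e4 := Fintype.sum_sum_type (fun x : Fin (α i) ⊕ Fin (α' i - α i) =>
      Sum.elim (fun m : Fin (MMDCAux.dd L i) => δ i ((MMDCAux.eqSi L i m : Fin t)))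
        (fun _ => (0 : ℝ)) (MMDCAux.splitEquiv (hCi i) x))
    rw [← e4, Equiv.sum_comp (MMDCAux.splitEquiv (hCi i)), Fintype.sum_sum_type]
    simp only [Sum.elim_inl, Sum.elim_inr, Finset.sum_const_zero, add_zero]
    rw [Equiv.sum_comp (MMDCAux.eqSi L i) (fun j' => δ i (j' : Fin t))]
    exact Finset.sum_coe_sort _ _
end

section
/- For every perfect matching f of G and every i ∈ Fin s, the number of indices j ∈ Fin t such that some vertex of A_i ∪ A'_i (a copy of a_i) is mapped by f to the vertex b_{j,i} is at least α i and at most α' i. -/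
variable {s t : ℕ}

/-- For every perfect matching `f` of `G` and every `i`, the number of
indices `j` such that some copy of `aᵢ` (in `A_i ∪ A'_i`) is mapped by `f` to `b_{j,i}`
is at least `α i` and at most `α' i`. -/
theorem demand_capacity_A_satisfied
    (s t : ℕ) (hs : 0 < s) (ht : 0 < t)
    (δ : Fin s → Fin t → ℝ) (α α' : Fin s → ℕ) (β β' : Fin t → ℕ)
    (hαα' : ∀ i, α i ≤ α' i) (hα't : ∀ i, α' i ≤ t)
    (hββ' : ∀ j, β j ≤ β' j) (hβ's : ∀ j, β' j ≤ s)
    (hbal : ∑ j, β j < ∑ i, α' i)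
    (γ' γ'' : ℝ) (hγ : γ' < γ'') (hγδ : ∀ i j, γ'' < δ i j)
    (f : VS s t α α' β β' ≃ VT s t α' β)
    (hf : IsPerfectMatching α α' β β' f) (i : Fin s) :
    α i ≤ Nat.card {j : Fin t //
        (∃ k, f (Sum.inl ⟨i, k⟩) = Sum.inl (j, i)) ∨
        (∃ k, f (Sum.inr (Sum.inl ⟨i, k⟩)) = Sum.inl (j, i))} ∧
    Nat.card {j : Fin t //
        (∃ k, f (Sum.inl ⟨i, k⟩) = Sum.inl (j, i)) ∨
        (∃ k, f (Sum.inr (Sum.inl ⟨i, k⟩)) = Sum.inl (j, i))} ≤ α' i := by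
  classical
  have key : ∀ k : Fin (α i), ∃ j, f (Sum.inl ⟨i, k⟩) = Sum.inl (j, i) := by
    intro k
    have h := hf (Sum.inl ⟨i, k⟩)
    rcases hv : f (Sum.inl ⟨i, k⟩) with ⟨j, i'⟩ | y
    · rw [hv] at h
      simp only [Allowed] at h
      exact ⟨j, by rw [h]⟩
    · rw [hv] at h
      exact absurd h (by simp [Allowed])
  set P : Fin t → Prop := fun j =>
      (∃ k, f (Sum.inl ⟨i, k⟩) = Sum.inl (j, i)) ∨
      (∃ k, f (Sum.inr (Sum.inl ⟨i, k⟩)) = Sum.inl (j, i)) with hP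
  have hlow : α i ≤ Nat.card {j : Fin t // P j} := by
    have inj : Function.Injective (fun k : Fin (α i) =>
        (⟨(key k).choose, Or.inl ⟨k, (key k).choose_spec⟩⟩ : {j : Fin t // P j})) := by
      intro k1 k2 h
      have h1 := (key k1).choose_spec
      have h2 := (key k2).choose_spec
      have : (key k1).choose = (key k2).choose := by
        simpa using congrArg Subtype.val h
      rw [this, ← h2] at h1
      have := f.injective h1
      simpa using this
    calc α i = Nat.card (Fin (α i)) := by simp
      _ ≤ Nat.card {j : Fin t // P j} := Nat.card_le_card_of_injective _ inj
  refine ⟨hlow, ?_⟩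
  have hup : Nat.card {j : Fin t // P j} ≤ α i + (α' i - α i) := by
    have inj : ∃ g : {j : Fin t // P j} → Fin (α i) ⊕ Fin (α' i - α i),
        Function.Injective g := by
      refine ⟨fun jp =>
        if h1 : ∃ k, f (Sum.inl ⟨i, k⟩) = Sum.inl (jp.1, i) then Sum.inl h1.choose
        else Sum.inr (jp.2.resolve_left h1).choose, ?_⟩
      rintro ⟨j1, hj1⟩ ⟨j2, hj2⟩ h
      dsimp only at h
      by_cases h1 : ∃ k, f (Sum.inl ⟨i, k⟩) = Sum.inl (j1, i)
      · by_cases h2 : ∃ k, f (Sum.inl ⟨i, k⟩) = Sum.inl (j2, i)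
        · rw [dif_pos h1, dif_pos h2] at h
          have e : h1.choose = h2.choose := Sum.inl.inj h
          have e1 := h1.choose_spec
          have e2 := h2.choose_spec
          rw [e, e2] at e1
          exact Subtype.ext (congrArg Prod.fst (Sum.inl.inj e1)).symm
        · rw [dif_pos h1, dif_neg h2] at h
          exact absurd h (by simp)
      · by_cases h2 : ∃ k, f (Sum.inl ⟨i, k⟩) = Sum.inl (j2, i)
        · rw [dif_neg h1, dif_pos h2] at h
          exact absurd h (by simp)
        · rw [dif_neg h1, dif_neg h2] at h
          have e : (hj1.resolve_left h1).choose = (hj2.resolve_left h2).choose :=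
            Sum.inr.inj h
          have e1 := (hj1.resolve_left h1).choose_spec
          have e2 := (hj2.resolve_left h2).choose_spec
          rw [e, e2] at e1
          exact Subtype.ext (congrArg Prod.fst (Sum.inl.inj e1)).symm
    obtain ⟨g, hg⟩ := inj
    calc Nat.card {j : Fin t // P j}
        ≤ Nat.card (Fin (α i) ⊕ Fin (α' i - α i)) := Nat.card_le_card_of_injective g hg
      _ = α i + (α' i - α i) := by simp [Nat.card_sum]
  calc Nat.card {j : Fin t // P j} ≤ α i + (α' i - α i) := hup
    _ = α' i := Nat.add_sub_cancel' (hαα' i)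
end

section
/- For every perfect matching f of G and every j ∈ Fin t, the number of indices i ∈ Fin s such that some vertex of A_i ∪ A'_i (a copy of a_i) is mapped by f to the vertex b_{j,i} is at least β j and at most β' j. -/
variable {s t : ℕ}

/-- For every perfect matching `f` of `G` and every `j`, the number of
indices `i` such that some copy of `aᵢ` (in `A_i ∪ A'_i`) is mapped by `f` to `b_{j,i}`
is at least `β j` and at most `β' j`. -/
theorem demand_capacity_B_satisfied
    (s t : ℕ) (hs : 0 < s) (ht : 0 < t)
    (δ : Fin s → Fin t → ℝ) (α α' : Fin s → ℕ) (β β' : Fin t → ℕ)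
    (hαα' : ∀ i, α i ≤ α' i) (hα't : ∀ i, α' i ≤ t)
    (hββ' : ∀ j, β j ≤ β' j) (hβ's : ∀ j, β' j ≤ s)
    (hbal : ∑ j, β j < ∑ i, α' i)
    (γ' γ'' : ℝ) (hγ : γ' < γ'') (hγδ : ∀ i j, γ'' < δ i j)
    (f : VS s t α α' β β' ≃ VT s t α' β)
    (hf : IsPerfectMatching α α' β β' f) (j : Fin t) :
    β j ≤ Nat.card {i : Fin s //
        (∃ k, f (Sum.inl ⟨i, k⟩) = Sum.inl (j, i)) ∨
        (∃ k, f (Sum.inr (Sum.inl ⟨i, k⟩)) = Sum.inl (j, i))} ∧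
    Nat.card {i : Fin s //
        (∃ k, f (Sum.inl ⟨i, k⟩) = Sum.inl (j, i)) ∨
        (∃ k, f (Sum.inr (Sum.inl ⟨i, k⟩)) = Sum.inl (j, i))} ≤ β' j := by
  classical
  set P : Fin s → Prop := fun i =>
    (∃ k, f (Sum.inl ⟨i, k⟩) = Sum.inl (j, i)) ∨
    (∃ k, f (Sum.inr (Sum.inl ⟨i, k⟩)) = Sum.inl (j, i)) with hP
  set e : Fin s → VS s t α α' β β' := fun i => f.symm (Sum.inl (j, i)) with he
  have hfe : ∀ i, f (e i) = Sum.inl (j, i) := fun i => f.apply_symm_apply _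
  have heinj : Function.Injective e := fun i i' h => by
    have h2 := congrArg f h
    rw [hfe, hfe] at h2
    simpa using h2
  set QX : Fin s → Prop := fun i =>
    ∃ x : (j' : Fin t) × Fin (β' j' - β j'), e i = Sum.inr (Sum.inr (Sum.inl x)) with hQX
  set QW : Fin s → Prop := fun i =>
    ∃ x : (j' : Fin t) × Fin (s - β' j'), e i = Sum.inr (Sum.inr (Sum.inr x)) with hQW
  have hPshape : ∀ i, P i → (∃ y, e i = Sum.inl y) ∨ (∃ y, e i = Sum.inr (Sum.inl y)) := by
    intro i hi
    rcases hi with ⟨k, hk⟩ | ⟨k, hk⟩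
    · exact Or.inl ⟨⟨i, k⟩, by rw [he]; simp only; rw [← hk, f.symm_apply_apply]⟩
    · exact Or.inr ⟨⟨i, k⟩, by rw [he]; simp only; rw [← hk, f.symm_apply_apply]⟩
  have hcase : ∀ i, P i ∨ QX i ∨ QW i := by
    intro i
    rcases hv : e i with ⟨i0, k⟩ | ⟨i0, k⟩ | x | x
    · left
      have h := hf (e i)
      rw [hfe i, hv] at h
      have h2 : i = i0 := h
      subst h2
      exact Or.inl ⟨k, by rw [← hv]; exact hfe i⟩
    · left
      have h := hf (e i)
      rw [hfe i, hv] at h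
      have h2 : i = i0 := h
      subst h2
      exact Or.inr ⟨k, by rw [← hv]; exact hfe i⟩
    · exact Or.inr (Or.inl ⟨x, hv⟩)
    · exact Or.inr (Or.inr ⟨x, hv⟩)
  have hPiff : ∀ i, P i ↔ ¬ (QX i ∨ QW i) := by
    intro i
    constructor
    · intro hi hcon
      rcases hPshape i hi with ⟨y, hy⟩ | ⟨y, hy⟩ <;>
        rcases hcon with ⟨x, hx⟩ | ⟨x, hx⟩ <;> rw [hy] at hx <;> simp at hx
    · intro hcon
      rcases hcase i with h | h | h
      · exact h
      · exact absurd (Or.inl h) hcon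
      · exact absurd (Or.inr h) hcon
  set SA : Finset (Fin s) := Finset.univ.filter P with hSA
  set SX : Finset (Fin s) := Finset.univ.filter QX with hSX
  set SW : Finset (Fin s) := Finset.univ.filter QW with hSW
  have hSAeq : SA = (SX ∪ SW)ᶜ := by
    ext i
    simp only [hSA, hSX, hSW, Finset.mem_filter, Finset.mem_compl, Finset.mem_union,
      Finset.mem_univ, true_and]
    rw [hPiff i]
  have hdisj : Disjoint SX SW := by
    rw [Finset.disjoint_left]
    intro i hi hi'
    simp only [hSX, hSW, Finset.mem_filter, Finset.mem_univ, true_and] at hi hi'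
    obtain ⟨x, hx⟩ := hi
    obtain ⟨y, hy⟩ := hi'
    rw [hx] at hy
    simp at hy
  -- the X part: at most β' j - β j elements
  have hXcard : SX.card ≤ β' j - β j := by
    have himg : SX.image e ⊆ Finset.univ.image
        (fun k : Fin (β' j - β j) => (Sum.inr (Sum.inr (Sum.inl ⟨j, k⟩)) : VS s t α α' β β')) := by
      intro v hv
      rw [Finset.mem_image] at hv
      obtain ⟨i, hi, rfl⟩ := hv
      simp only [hSX, hQX, Finset.mem_filter, Finset.mem_univ, true_and] at hi
      obtain ⟨⟨j0, k⟩, hx⟩ := hi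
      have h := hf (e i)
      rw [hfe i, hx] at h
      have h2 : j = j0 := h
      subst h2
      rw [Finset.mem_image]
      exact ⟨k, Finset.mem_univ _, hx.symm⟩
    have h1 : (SX.image e).card = SX.card := Finset.card_image_of_injective _ heinj
    have h2 := Finset.card_le_card himg
    have h3 : (Finset.univ.image
        (fun k : Fin (β' j - β j) => (Sum.inr (Sum.inr (Sum.inl ⟨j, k⟩)) : VS s t α α' β β'))).card
        ≤ β' j - β j := by
      calc _ ≤ (Finset.univ : Finset (Fin (β' j - β j))).card := Finset.card_image_le
        _ = β' j - β j := by simp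
    omega
  -- the W part: exactly s - β' j elements
  have hWcard : SW.card = s - β' j := by
    have hgW0 : ∀ k : Fin (s - β' j), ∃ i,
        f (Sum.inr (Sum.inr (Sum.inr ⟨j, k⟩))) = Sum.inl (j, i) := by
      intro k
      have h := hf (Sum.inr (Sum.inr (Sum.inr ⟨j, k⟩)))
      rcases hw : f (Sum.inr (Sum.inr (Sum.inr ⟨j, k⟩))) with ⟨j', i⟩ | y
      · rw [hw] at h
        have h2 : j' = j := h
        subst h2
        exact ⟨i, rfl⟩
      · rw [hw] at h
        exact False.elim h
    set gW : Fin (s - β' j) → Fin s := fun k => (hgW0 k).choose with hgWdef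
    have hgW : ∀ k, f (Sum.inr (Sum.inr (Sum.inr ⟨j, k⟩))) = Sum.inl (j, gW k) :=
      fun k => (hgW0 k).choose_spec
    have hbij : (Finset.univ : Finset (Fin (s - β' j))).card = SW.card := by
      apply Finset.card_bij (fun k _ => gW k)
      · intro k _
        simp only [hSW, hQW, Finset.mem_filter, Finset.mem_univ, true_and]
        refine ⟨⟨j, k⟩, ?_⟩
        rw [he]; simp only; rw [← hgW k, f.symm_apply_apply]
      · intro k _ k' _ hkk
        have h2 : f (Sum.inr (Sum.inr (Sum.inr (⟨j, k⟩ : (j' : Fin t) × Fin (s - β' j'))))) =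
            f (Sum.inr (Sum.inr (Sum.inr ⟨j, k'⟩))) := by
          rw [hgW k, hgW k', hkk]
        have := f.injective h2
        simpa using this
      · intro i hi
        simp only [hSW, hQW, Finset.mem_filter, Finset.mem_univ, true_and] at hi
        obtain ⟨⟨j0, k⟩, hx⟩ := hi
        have h := hf (e i)
        rw [hfe i, hx] at h
        have h2 : j = j0 := h
        subst h2
        refine ⟨k, Finset.mem_univ _, ?_⟩
        have h3 : f (Sum.inr (Sum.inr (Sum.inr (⟨j, k⟩ : (j' : Fin t) × Fin (s - β' j'))))) =
            Sum.inl (j, i) := by rw [← hx]; exact hfe i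
        have h4 := hgW k
        rw [h3] at h4
        simpa using h4.symm
    rw [← hbij]
    simp
  have hunion : (SX ∪ SW).card = SX.card + SW.card := Finset.card_union_of_disjoint hdisj
  have hcompl : SA.card = s - (SX ∪ SW).card := by
    rw [hSAeq, Finset.card_compl]
    simp
  have hle : (SX ∪ SW).card ≤ s := by
    calc (SX ∪ SW).card ≤ Fintype.card (Fin s) := Finset.card_le_univ _
      _ = s := by simp
  have hNcard : Nat.card {i : Fin s // P i} = SA.card := by
    rw [Nat.card_eq_fintype_card, hSA]
    exact Fintype.card_subtype _
  rw [hNcard]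
  have hb1 := hββ' j
  have hb2 := hβ's j
  omega
end

section
/- Let f* be a perfect matching of G of minimum total weight among all perfect matchings of G. Then the induced set of pairs L' = {(i,j) ∈ Fin s × Fin t : some vertex of A_i ∪ A'_i is mapped by f* to b_{j,i}} is an MMDC matching between A and B, and its cost satisfies c(L') = w_main(f*). -/
variable {s t : ℕ}

/-- Auxiliary: the combined type of copies `A_i` and `A'_i`. -/
abbrev Copies (s : ℕ) (α α' : Fin s → ℕ) : Type :=
  ((i : Fin s) × Fin (α i)) ⊕ ((i : Fin s) × Fin (α' i - α i))

/-- Embedding of copies into `V_S`. -/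
def cemb (α α' : Fin s → ℕ) (β β' : Fin t → ℕ) : Copies s α α' → VS s t α α' β β'
  | Sum.inl a => Sum.inl a
  | Sum.inr a => Sum.inr (Sum.inl a)

/-- The index of the point of `A` that a copy is a copy of. -/
def cidx {α α' : Fin s → ℕ} : Copies s α α' → Fin s
  | Sum.inl a => a.1
  | Sum.inr a => a.1

/-- Extract the `j`-index from a right vertex. -/
def jOf {α' : Fin s → ℕ} {β : Fin t → ℕ} (j0 : Fin t) : VT s t α' β → Fin t
  | Sum.inl (j, _) => j
  | Sum.inr _ => j0

/-- Extract the `i`-index from a right vertex. -/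
def iOf {α' : Fin s → ℕ} {β : Fin t → ℕ} (i0 : Fin s) : VT s t α' β → Fin s
  | Sum.inl (_, i) => i
  | Sum.inr _ => i0

lemma cemb_injective (α α' : Fin s → ℕ) (β β' : Fin t → ℕ) :
    Function.Injective (cemb (t := t) α α' β β') := by
  intro a b h
  cases a <;> cases b <;> simp [cemb] at h <;> simp [h]

/-- The main-weight contribution of a copy. -/
def gfun (δ : Fin s → Fin t → ℝ) (α α' : Fin s → ℕ) (β β' : Fin t → ℕ)
    (f : VS s t α α' β β' ≃ VT s t α' β) (c : Copies s α α') : ℝ :=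
  match f (cemb α α' β β' c) with
  | Sum.inl (j, i') => if i' = cidx c then δ (cidx c) j else 0
  | Sum.inr _ => 0

/-- **Lemma 2, first part.** The set of pairs induced by a minimum-weight
perfect matching of `G` is an MMDC matching whose cost equals the main weight of the
matching. -/
theorem induced_is_MMDC_and_cost_eq_mainWeight
    (s t : ℕ) (hs : 0 < s) (ht : 0 < t)
    (δ : Fin s → Fin t → ℝ) (α α' : Fin s → ℕ) (β β' : Fin t → ℕ)
    (hαα' : ∀ i, α i ≤ α' i) (hα't : ∀ i, α' i ≤ t)
    (hββ' : ∀ j, β j ≤ β' j) (hβ's : ∀ j, β' j ≤ s)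
    (hbal : ∑ j, β j < ∑ i, α' i)
    (γ' γ'' : ℝ) (hγ : γ' < γ'') (hγδ : ∀ i j, γ'' < δ i j)
    (f : VS s t α α' β β' ≃ VT s t α' β)
    (hf : IsPerfectMatching α α' β β' f)
    (hfmin : ∀ g : VS s t α α' β β' ≃ VT s t α' β, IsPerfectMatching α α' β β' g →
      totalWeight δ γ' γ'' α α' β β' f ≤ totalWeight δ γ' γ'' α α' β β' g) :
    IsMMDC α α' β β'
      (Finset.univ.filter fun p : Fin s × Fin t =>
        (∃ k, f (Sum.inl ⟨p.1, k⟩) = Sum.inl (p.2, p.1)) ∨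
        (∃ k, f (Sum.inr (Sum.inl ⟨p.1, k⟩)) = Sum.inl (p.2, p.1))) ∧
    cost δ
      (Finset.univ.filter fun p : Fin s × Fin t =>
        (∃ k, f (Sum.inl ⟨p.1, k⟩) = Sum.inl (p.2, p.1)) ∨
        (∃ k, f (Sum.inr (Sum.inl ⟨p.1, k⟩)) = Sum.inl (p.2, p.1)))
      = mainWeight δ α α' β β' f := by
  have hinj := f.injective
  -- structural facts from `hf`
  have main_idx : ∀ (c : Copies s α α') (j : Fin t) (i' : Fin s),
      f (cemb α α' β β' c) = Sum.inl (j, i') → i' = cidx c := by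
    intro c j i' h
    have h2 := hf (cemb α α' β β' c)
    rw [h] at h2
    rcases c with ⟨i, k⟩ | ⟨i, k⟩ <;> exact h2
  have hA : ∀ (a : (i : Fin s) × Fin (α i)), ∃ j, f (Sum.inl a) = Sum.inl (j, a.1) := by
    intro a
    have h2 := hf (Sum.inl a)
    rcases hv : f (Sum.inl a) with ⟨j, i'⟩ | y
    · rw [hv] at h2
      obtain ⟨i, k⟩ := a
      have hii : i' = i := h2
      exact ⟨j, by rw [hii]⟩
    · rw [hv] at h2
      obtain ⟨i, k⟩ := a
      exact h2.elim
  have hW : ∀ (a : (j : Fin t) × Fin (s - β' j)),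
      ∃ i, f (Sum.inr (Sum.inr (Sum.inr a))) = Sum.inl (a.1, i) := by
    intro a
    have h2 := hf (Sum.inr (Sum.inr (Sum.inr a)))
    rcases hv : f (Sum.inr (Sum.inr (Sum.inr a))) with ⟨j', i⟩ | y
    · rw [hv] at h2
      obtain ⟨j, k⟩ := a
      have hjj : j' = j := h2
      exact ⟨i, by rw [hjj]⟩
    · rw [hv] at h2
      obtain ⟨j, k⟩ := a
      exact h2.elim
  have hXj : ∀ (a : (j : Fin t) × Fin (β' j - β j)) (j' : Fin t) (i : Fin s),
      f (Sum.inr (Sum.inr (Sum.inl a))) = Sum.inl (j', i) → j' = a.1 := by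
    intro a j' i h
    have h2 := hf (Sum.inr (Sum.inr (Sum.inl a)))
    rw [h] at h2
    obtain ⟨j, k⟩ := a
    exact h2
  have j0 : Fin t := ⟨0, ht⟩
  have i0 : Fin s := ⟨0, hs⟩
  refine ⟨⟨fun i => ?_, fun j => ?_⟩, ?_⟩
  · -- bounds for a_i
    set S : Finset (Copies s α α') :=
      Finset.univ.filter (fun c => cidx c = i ∧ ∃ j, f (cemb α α' β β' c) = Sum.inl (j, i))
      with hSdef
    have hcard : S.card = (Finset.filter (fun p : Fin s × Fin t => p.1 = i)
        (Finset.univ.filter (fun p : Fin s × Fin t =>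
          (∃ k, f (Sum.inl ⟨p.1, k⟩) = Sum.inl (p.2, p.1)) ∨
          (∃ k, f (Sum.inr (Sum.inl ⟨p.1, k⟩)) = Sum.inl (p.2, p.1))))).card := by
      refine Finset.card_nbij (fun c => (i, jOf j0 (f (cemb α α' β β' c)))) ?_ ?_ ?_
      · intro c hc
        simp only [Finset.coe_filter, Set.mem_setOf_eq, Finset.mem_coe, hSdef, Finset.mem_filter, Finset.mem_univ, true_and] at hc ⊢
        obtain ⟨hci, j, hj⟩ := hc
        have hjof : jOf j0 (f (cemb α α' β β' c)) = j := by rw [hj]; rfl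
        rw [hjof]
        refine ⟨?_, by trivial⟩
        rcases c with ⟨i1, k⟩ | ⟨i1, k⟩
        · have hii : i1 = i := hci
          subst hii
          exact Or.inl ⟨k, hj⟩
        · have hii : i1 = i := hci
          subst hii
          exact Or.inr ⟨k, hj⟩
      · intro c1 h1 c2 h2 heq
        simp only [Finset.coe_filter, Set.mem_setOf_eq, Finset.mem_univ, true_and,
          hSdef, Finset.mem_filter] at h1 h2
        obtain ⟨hc1, j1, hj1⟩ := h1
        obtain ⟨hc2, j2, hj2⟩ := h2
        have hjof1 : jOf j0 (f (cemb α α' β β' c1)) = j1 := by rw [hj1]; rfl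
        have hjof2 : jOf j0 (f (cemb α α' β β' c2)) = j2 := by rw [hj2]; rfl
        rw [Prod.mk.injEq, hjof1, hjof2] at heq
        apply cemb_injective α α' β β'
        apply hinj
        rw [hj1, hj2, heq.2]
      · intro p hp
        simp only [Finset.coe_filter, Set.mem_setOf_eq, Finset.mem_univ, true_and,
          Finset.mem_filter] at hp
        obtain ⟨hbig, hpi⟩ := hp
        obtain ⟨i1, j⟩ := p
        simp only at hpi
        subst hpi
        rcases hbig with ⟨k, hk⟩ | ⟨k, hk⟩
        · refine ⟨Sum.inl ⟨i1, k⟩, ?_, ?_⟩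
          · simp only [Finset.mem_coe, hSdef, Finset.mem_filter, Finset.mem_univ, true_and]
            exact ⟨rfl, j, hk⟩
          · show (i1, jOf j0 (f (Sum.inl ⟨i1, k⟩))) = (i1, j)
            rw [hk]
            rfl
        · refine ⟨Sum.inr ⟨i1, k⟩, ?_, ?_⟩
          · simp only [Finset.mem_coe, hSdef, Finset.mem_filter, Finset.mem_univ, true_and]
            exact ⟨rfl, j, hk⟩
          · show (i1, jOf j0 (f (Sum.inr (Sum.inl ⟨i1, k⟩)))) = (i1, j)
            rw [hk]
            rfl
    have hub : S.card ≤ α' i := by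
      have hsub : S ⊆ Finset.univ.image
          (Sum.map (fun k : Fin (α i) => (⟨i, k⟩ : (i : Fin s) × Fin (α i)))
            (fun k : Fin (α' i - α i) => (⟨i, k⟩ : (i : Fin s) × Fin (α' i - α i)))) := by
        intro c hc
        simp only [hSdef, Finset.mem_filter, Finset.mem_univ, true_and] at hc
        obtain ⟨hci, -⟩ := hc
        rcases c with ⟨i1, k⟩ | ⟨i1, k⟩
        · have hii : i1 = i := hci
          subst hii
          exact Finset.mem_image.mpr ⟨Sum.inl k, Finset.mem_univ _, rfl⟩
        · have hii : i1 = i := hci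
          subst hii
          exact Finset.mem_image.mpr ⟨Sum.inr k, Finset.mem_univ _, rfl⟩
      calc S.card ≤ _ := Finset.card_le_card hsub
        _ ≤ (Finset.univ : Finset (Fin (α i) ⊕ Fin (α' i - α i))).card :=
            Finset.card_image_le
        _ = α i + (α' i - α i) := by simp
        _ = α' i := by have := hαα' i; omega
    have hlb : α i ≤ S.card := by
      have hemb : Function.Injective (fun k : Fin (α i) => (Sum.inl ⟨i, k⟩ : Copies s α α')) := by
        intro k1 k2 h
        simpa using h
      have hsub : (Finset.univ.image fun k : Fin (α i) => (Sum.inl ⟨i, k⟩ : Copies s α α')) ⊆ S := by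
        intro c hc
        simp only [Finset.mem_image] at hc
        obtain ⟨k, -, rfl⟩ := hc
        simp only [hSdef, Finset.mem_filter, Finset.mem_univ, true_and]
        refine ⟨rfl, ?_⟩
        obtain ⟨j, hj⟩ := hA ⟨i, k⟩
        exact ⟨j, hj⟩
      calc α i = (Finset.univ.image fun k : Fin (α i) => (Sum.inl ⟨i, k⟩ : Copies s α α')).card := by
            rw [Finset.card_image_of_injective _ hemb, Finset.card_univ, Fintype.card_fin]
        _ ≤ S.card := Finset.card_le_card hsub
    rw [← hcard]
    exact ⟨hlb, hub⟩
  · -- bounds for b_j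
    set T1 : Finset (Fin s) := Finset.univ.filter (fun i =>
      (∃ k, f (Sum.inl ⟨i, k⟩) = Sum.inl (j, i)) ∨
      (∃ k, f (Sum.inr (Sum.inl ⟨i, k⟩)) = Sum.inl (j, i))) with hT1
    set T2 : Finset (Fin s) := Finset.univ.filter (fun i =>
      ∃ k, f (Sum.inr (Sum.inr (Sum.inl ⟨j, k⟩))) = Sum.inl (j, i)) with hT2
    set T3 : Finset (Fin s) := Finset.univ.filter (fun i =>
      ∃ k, f (Sum.inr (Sum.inr (Sum.inr ⟨j, k⟩))) = Sum.inl (j, i)) with hT3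
    have hcard : T1.card = (Finset.filter (fun p : Fin s × Fin t => p.2 = j)
        (Finset.univ.filter (fun p : Fin s × Fin t =>
          (∃ k, f (Sum.inl ⟨p.1, k⟩) = Sum.inl (p.2, p.1)) ∨
          (∃ k, f (Sum.inr (Sum.inl ⟨p.1, k⟩)) = Sum.inl (p.2, p.1))))).card := by
      refine Finset.card_nbij (fun i => (i, j)) ?_ ?_ ?_
      · intro i hi
        simp only [Finset.coe_filter, Set.mem_setOf_eq, Finset.mem_coe, hT1, Finset.mem_filter, Finset.mem_univ, true_and] at hi ⊢
        exact ⟨hi, trivial⟩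
      · intro i1 _ i2 _ heq
        simpa using heq
      · intro p hp
        simp only [Finset.coe_filter, Set.mem_setOf_eq, Finset.mem_univ, true_and,
          Finset.mem_filter] at hp
        obtain ⟨hbig, hpj⟩ := hp
        obtain ⟨i, j1⟩ := p
        simp only at hpj
        subst hpj
        exact ⟨i, by simp only [Finset.mem_coe, hT1, Finset.mem_filter, Finset.mem_univ,
          true_and]; exact hbig, rfl⟩
    have hcover : ∀ i : Fin s, i ∈ T1 ∨ i ∈ T2 ∨ i ∈ T3 := by
      intro i
      have hv : f (f.symm (Sum.inl (j, i))) = Sum.inl (j, i) := f.apply_symm_apply _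
      have ha := hf (f.symm (Sum.inl (j, i)))
      rcases hw : f.symm (Sum.inl (j, i)) with ⟨i1, k⟩ | (⟨i1, k⟩ | (⟨j1, k⟩ | ⟨j1, k⟩)) <;>
        rw [hw] at hv ha <;> rw [hv] at ha
      · have hii : i = i1 := ha
        subst hii
        refine Or.inl ?_
        simp only [hT1, Finset.mem_filter, Finset.mem_univ, true_and]
        exact Or.inl ⟨k, hv⟩
      · have hii : i = i1 := ha
        subst hii
        refine Or.inl ?_
        simp only [hT1, Finset.mem_filter, Finset.mem_univ, true_and]
        exact Or.inr ⟨k, hv⟩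
      · have hjj : j = j1 := ha
        subst hjj
        refine Or.inr (Or.inl ?_)
        simp only [hT2, Finset.mem_filter, Finset.mem_univ, true_and]
        exact ⟨k, hv⟩
      · have hjj : j = j1 := ha
        subst hjj
        refine Or.inr (Or.inr ?_)
        simp only [hT3, Finset.mem_filter, Finset.mem_univ, true_and]
        exact ⟨k, hv⟩
    have h12 : ∀ i ∈ T1, i ∉ T2 := by
      intro i hi1 hi2
      simp only [hT1, hT2, Finset.mem_filter, Finset.mem_univ, true_and] at hi1 hi2
      obtain ⟨k2, hk2⟩ := hi2
      rcases hi1 with ⟨k1, hk1⟩ | ⟨k1, hk1⟩ <;>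
        exact absurd (hinj (hk1.trans hk2.symm)) (by simp)
    have h13 : ∀ i ∈ T1, i ∉ T3 := by
      intro i hi1 hi3
      simp only [hT1, hT3, Finset.mem_filter, Finset.mem_univ, true_and] at hi1 hi3
      obtain ⟨k2, hk2⟩ := hi3
      rcases hi1 with ⟨k1, hk1⟩ | ⟨k1, hk1⟩ <;>
        exact absurd (hinj (hk1.trans hk2.symm)) (by simp)
    have h23 : ∀ i ∈ T2, i ∉ T3 := by
      intro i hi2 hi3
      simp only [hT2, hT3, Finset.mem_filter, Finset.mem_univ, true_and] at hi2 hi3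
      obtain ⟨k1, hk1⟩ := hi2
      obtain ⟨k2, hk2⟩ := hi3
      exact absurd (hinj (hk1.trans hk2.symm)) (by simp)
    have hunion : T1 ∪ T2 ∪ T3 = Finset.univ := by
      ext i
      simp only [Finset.mem_union, Finset.mem_univ, iff_true]
      rcases hcover i with h | h | h
      · exact Or.inl (Or.inl h)
      · exact Or.inl (Or.inr h)
      · exact Or.inr h
    have hsum : T1.card + T2.card + T3.card = s := by
      have hd12 : Disjoint T1 T2 := Finset.disjoint_left.mpr h12
      have hd3 : Disjoint (T1 ∪ T2) T3 := Finset.disjoint_union_left.mpr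
        ⟨Finset.disjoint_left.mpr h13, Finset.disjoint_left.mpr h23⟩
      have h1 : (T1 ∪ T2 ∪ T3).card = (T1 ∪ T2).card + T3.card :=
        Finset.card_union_of_disjoint hd3
      rw [Finset.card_union_of_disjoint hd12] at h1
      rw [hunion, Finset.card_univ, Fintype.card_fin] at h1
      omega
    have hT3card : T3.card = s - β' j := by
      have himg : T3 = Finset.univ.image
          (fun k : Fin (s - β' j) => iOf i0 (f (Sum.inr (Sum.inr (Sum.inr ⟨j, k⟩))))) := by
        ext i
        simp only [hT3, Finset.mem_filter, Finset.mem_univ, true_and, Finset.mem_image,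
          true_and]
        constructor
        · rintro ⟨k, hk⟩
          exact ⟨k, by rw [hk]; rfl⟩
        · rintro ⟨k, hk⟩
          obtain ⟨i1, h1⟩ := hW ⟨j, k⟩
          rw [h1] at hk
          have hi1 : i1 = i := hk
          subst hi1
          exact ⟨k, h1⟩
      have hinj3 : Function.Injective
          (fun k : Fin (s - β' j) => iOf i0 (f (Sum.inr (Sum.inr (Sum.inr (⟨j, k⟩ : (j : Fin t) × Fin (s - β' j))))))) := by
        intro k1 k2 h
        obtain ⟨i1, h1⟩ := hW ⟨j, k1⟩
        obtain ⟨i2, h2⟩ := hW ⟨j, k2⟩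
        simp only [h1, h2] at h
        have hii : i1 = i2 := h
        subst hii
        have := hinj (h1.trans h2.symm)
        simpa using this
      rw [himg, Finset.card_image_of_injective _ hinj3, Finset.card_univ, Fintype.card_fin]
    have hT2card : T2.card ≤ β' j - β j := by
      have hsub : T2 ⊆ Finset.univ.image
          (fun k : Fin (β' j - β j) => iOf i0 (f (Sum.inr (Sum.inr (Sum.inl ⟨j, k⟩))))) := by
        intro i hi
        simp only [hT2, Finset.mem_filter, Finset.mem_univ, true_and] at hi
        obtain ⟨k, hk⟩ := hi
        exact Finset.mem_image.mpr ⟨k, Finset.mem_univ _, by rw [hk]; rfl⟩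
      calc T2.card ≤ _ := Finset.card_le_card hsub
        _ ≤ (Finset.univ : Finset (Fin (β' j - β j))).card := Finset.card_image_le
        _ = β' j - β j := by simp
    rw [← hcard]
    have hb1 := hβ's j
    have hb2 := hββ' j
    omega
  · -- cost equality
    set S : Finset (Copies s α α') := Finset.univ.filter
      (fun c => ∃ j, f (cemb α α' β β' c) = Sum.inl (j, cidx c)) with hS
    have hmain : mainWeight δ α α' β β' f
        = ∑ c ∈ S, δ (cidx c) (jOf j0 (f (cemb α α' β β' c))) := by
      have h0 : mainWeight δ α α' β β' f = ∑ c : Copies s α α', gfun δ α α' β β' f c :=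
        (Fintype.sum_sum_type (gfun δ α α' β β' f)).symm
      rw [h0]
      rw [← Finset.sum_subset (Finset.subset_univ S) ?_]
      · apply Finset.sum_congr rfl
        intro c hc
        simp only [hS, Finset.mem_filter, Finset.mem_univ, true_and] at hc
        obtain ⟨jj, hj⟩ := hc
        have hjof : jOf j0 (f (cemb α α' β β' c)) = jj := by rw [hj]; rfl
        rw [hjof]
        simp [gfun, hj]
      · intro c _ hc
        simp only [hS, Finset.mem_filter, Finset.mem_univ, true_and, not_exists] at hc
        rcases hv : f (cemb α α' β β' c) with ⟨jj, ii⟩ | y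
        · have := main_idx c jj ii hv
          subst this
          exact absurd hv (hc jj)
        · simp [gfun, hv]
    rw [hmain]
    unfold cost
    refine Eq.symm (Finset.sum_bij (fun c _ => (cidx c, jOf j0 (f (cemb α α' β β' c)))) ?_ ?_ ?_ ?_)
    · intro c hc
      simp only [hS, Finset.mem_filter, Finset.mem_univ, true_and] at hc ⊢
      obtain ⟨jj, hj⟩ := hc
      have hjof : jOf j0 (f (cemb α α' β β' c)) = jj := by rw [hj]; rfl
      rw [hjof]
      rcases c with ⟨i1, k⟩ | ⟨i1, k⟩
      · exact Or.inl ⟨k, hj⟩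
      · exact Or.inr ⟨k, hj⟩
    · intro c1 h1 c2 h2 heq
      simp only [hS, Finset.mem_filter, Finset.mem_univ, true_and] at h1 h2
      obtain ⟨j1, hj1⟩ := h1
      obtain ⟨j2, hj2⟩ := h2
      have hjof1 : jOf j0 (f (cemb α α' β β' c1)) = j1 := by rw [hj1]; rfl
      have hjof2 : jOf j0 (f (cemb α α' β β' c2)) = j2 := by rw [hj2]; rfl
      rw [Prod.mk.injEq, hjof1, hjof2] at heq
      apply cemb_injective α α' β β'
      apply hinj
      rw [hj1, hj2, heq.1, heq.2]
    · intro p hp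
      simp only [Finset.mem_filter, Finset.mem_univ, true_and] at hp
      obtain ⟨i1, j1⟩ := p
      rcases hp with ⟨k, hk⟩ | ⟨k, hk⟩
      · refine ⟨Sum.inl ⟨i1, k⟩, ?_, ?_⟩
        · simp only [hS, Finset.mem_filter, Finset.mem_univ, true_and]
          exact ⟨j1, hk⟩
        · show (i1, jOf j0 (f (Sum.inl ⟨i1, k⟩))) = (i1, j1)
          rw [hk]
          rfl
      · refine ⟨Sum.inr ⟨i1, k⟩, ?_, ?_⟩
        · simp only [hS, Finset.mem_filter, Finset.mem_univ, true_and]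
          exact ⟨j1, hk⟩
        · show (i1, jOf j0 (f (Sum.inr (Sum.inl ⟨i1, k⟩)))) = (i1, j1)
          rw [hk]
          rfl
    · intro c hc
      rfl
end

section
/- Let f* be a perfect matching of G of minimum total weight among all perfect matchings of G, and let L be an MMDC matching of minimum cost among all MMDC matchings between A and B. Then w_main(f*) ≥ c(L). -/
variable {s t : ℕ}

section MyAux
variable {α α' : Fin s → ℕ} {β β' : Fin t → ℕ}

def idxS (hs : 0 < s) : VS s t α α' β β' → Fin s
  | Sum.inl ⟨i, _⟩ => i
  | Sum.inr (Sum.inl ⟨i, _⟩) => i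
  | _ => ⟨0, hs⟩

def colT (ht : 0 < t) : VT s t α' β → Fin t
  | Sum.inl (j, _) => j
  | Sum.inr _ => ⟨0, ht⟩

def rowT (hs : 0 < s) : VT s t α' β → Fin s
  | Sum.inl (_, i) => i
  | Sum.inr _ => ⟨0, hs⟩

def isMainS : VS s t α α' β β' → Prop
  | Sum.inl _ => True
  | Sum.inr (Sum.inl _) => True
  | _ => False

def isXS : VS s t α α' β β' → Prop
  | Sum.inr (Sum.inr (Sum.inl _)) => True
  | _ => False

def isWS : VS s t α α' β β' → Prop
  | Sum.inr (Sum.inr (Sum.inr _)) => True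
  | _ => False

def isBT : VT s t α' β → Prop
  | Sum.inl _ => True
  | Sum.inr _ => False

end MyAux

/-- **Lemma 2.** If `f*` is a minimum-total-weight perfect matching of `G`
and `L` is a minimum-cost MMDC matching, then `w_main(f*) ≥ c(L)`. -/
theorem cost_le_mainWeight
    (s t : ℕ) (hs : 0 < s) (ht : 0 < t)
    (δ : Fin s → Fin t → ℝ) (α α' : Fin s → ℕ) (β β' : Fin t → ℕ)
    (hαα' : ∀ i, α i ≤ α' i) (hα't : ∀ i, α' i ≤ t)
    (hββ' : ∀ j, β j ≤ β' j) (hβ's : ∀ j, β' j ≤ s)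
    (hbal : ∑ j, β j < ∑ i, α' i)
    (γ' γ'' : ℝ) (hγ : γ' < γ'') (hγδ : ∀ i j, γ'' < δ i j)
    (f : VS s t α α' β β' ≃ VT s t α' β)
    (hf : IsPerfectMatching α α' β β' f)
    (hfmin : ∀ g : VS s t α α' β β' ≃ VT s t α' β, IsPerfectMatching α α' β β' g →
      totalWeight δ γ' γ'' α α' β β' f ≤ totalWeight δ γ' γ'' α α' β β' g)
    (L : Finset (Fin s × Fin t)) (hL : IsMMDC α α' β β' L)
    (hLmin : ∀ L', IsMMDC α α' β β' L' → cost δ L ≤ cost δ L') :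
    cost δ L ≤ mainWeight δ α α' β β' f := by
  classical
  set M : Finset (VS s t α α' β β') :=
    Finset.univ.filter (fun v => isMainS v ∧ isBT (f v)) with hMdef
  have hMmem : ∀ v, v ∈ M ↔ isMainS v ∧ isBT (f v) := by
    intro v; simp [hMdef]
  set π : VS s t α α' β β' → Fin s × Fin t :=
    fun v => (idxS hs v, colT ht (f v)) with hπdef
  -- every member of M is matched to b_{col, idx}
  have hmain : ∀ v ∈ M, f v = Sum.inl (colT ht (f v), idxS hs v) := by
    intro v hv
    obtain ⟨hm, hb⟩ := (hMmem v).1 hv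
    have hA := hf v
    rcases v with ⟨i, c⟩ | ⟨i, c⟩ | w | w
    · rcases h : f (Sum.inl ⟨i, c⟩) with ⟨j, i'⟩ | y
      · rw [h] at hA
        have hii : i' = i := hA
        subst hii; rfl
      · rw [h] at hb; exact absurd hb (by simp [isBT])
    · rcases h : f (Sum.inr (Sum.inl ⟨i, c⟩)) with ⟨j, i'⟩ | y
      · rw [h] at hA
        have hii : i' = i := hA
        subst hii; rfl
      · rw [h] at hb; exact absurd hb (by simp [isBT])
    · exact absurd hm (by rcases w with ⟨j, c⟩; simp [isMainS])
    · exact absurd hm (by rcases w with ⟨j, c⟩; simp [isMainS])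
  have hπinj : ∀ v ∈ M, ∀ v' ∈ M, π v = π v' → v = v' := by
    intro v hv v' hv' h
    apply f.injective
    rw [hmain v hv, hmain v' hv']
    simp only [hπdef, Prod.mk.injEq] at h
    rw [h.1, h.2]
  set Lf : Finset (Fin s × Fin t) := M.image π with hLfdef
  -- cost of Lf
  have hcost : cost δ Lf = ∑ v ∈ M, δ (idxS hs v) (colT ht (f v)) := by
    rw [hLfdef, cost, Finset.sum_image hπinj]
  -- mainWeight equals the same sum
  have hmw : mainWeight δ α α' β β' f = ∑ v ∈ M, δ (idxS hs v) (colT ht (f v)) := by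
    rw [mainWeight, hMdef]
    simp only [Finset.sum_filter]
    rw [Fintype.sum_sum_type, Fintype.sum_sum_type, Fintype.sum_sum_type]
    simp only [isMainS, false_and, if_false, true_and, Finset.sum_const_zero, add_zero]
    congr 1
    · apply Finset.sum_congr rfl
      intro v _
      obtain ⟨i, c⟩ := v
      have hA := hf (Sum.inl ⟨i, c⟩ : VS s t α α' β β')
      rcases h : f (Sum.inl ⟨i, c⟩) with ⟨j, i'⟩ | y
      · rw [h] at hA
        have hii : i' = i := hA
        subst hii
        simp [isBT, idxS, colT]
      · rw [h] at hA; exact absurd hA (by simp [Allowed])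
    · apply Finset.sum_congr rfl
      intro v _
      obtain ⟨i, c⟩ := v
      have hA := hf (Sum.inr (Sum.inl ⟨i, c⟩) : VS s t α α' β β')
      rcases h : f (Sum.inr (Sum.inl ⟨i, c⟩)) with ⟨j, i'⟩ | y
      · rw [h] at hA
        have hii : i' = i := hA
        subst hii
        simp [isBT, idxS, colT]
      · simp [isBT]
  -- row cardinalities
  have hrow : ∀ i : Fin s,
      α i ≤ (Lf.filter fun p => p.1 = i).card ∧
        (Lf.filter fun p => p.1 = i).card ≤ α' i := by
    intro i
    have hcardeq : (Lf.filter fun p => p.1 = i).card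
        = (M.filter fun v => idxS hs v = i).card := by
      have hfilt : (Lf.filter fun p => p.1 = i)
          = (M.filter fun v => idxS hs v = i).image π := by
        rw [hLfdef, Finset.filter_image]
      rw [hfilt]
      apply Finset.card_image_of_injOn
      intro v hv v' hv' h
      exact hπinj v (Finset.mem_of_mem_filter _ (Finset.mem_coe.1 hv))
        v' (Finset.mem_of_mem_filter _ (Finset.mem_coe.1 hv')) h
    rw [hcardeq]
    constructor
    · -- lower bound: the A_i copies
      have hle := Finset.card_le_card_of_injOn
        (f := fun c : Fin (α i) => (Sum.inl ⟨i, c⟩ : VS s t α α' β β'))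
        (s := Finset.univ) (t := M.filter fun v => idxS hs v = i)
        (by
          intro c _
          refine Finset.mem_filter.2 ⟨(hMmem _).2 ⟨trivial, ?_⟩, rfl⟩
          have hA := hf (Sum.inl ⟨i, c⟩ : VS s t α α' β β')
          rcases h : f (Sum.inl ⟨i, c⟩) with ⟨j, i'⟩ | y
          · trivial
          · rw [h] at hA; exact absurd hA (by simp [Allowed]))
        (by intro a _ b _ h; simpa using h)
      simpa using hle
    · -- upper bound
      have hsub : (M.filter fun v => idxS hs v = i) ⊆
          (Finset.univ.image fun c : Fin (α i) => (Sum.inl ⟨i, c⟩ : VS s t α α' β β')) ∪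
          (Finset.univ.image fun c : Fin (α' i - α i) =>
            (Sum.inr (Sum.inl ⟨i, c⟩) : VS s t α α' β β')) := by
        intro v hv
        obtain ⟨hvM, hvi⟩ := Finset.mem_filter.1 hv
        obtain ⟨hm, -⟩ := (hMmem v).1 hvM
        rcases v with ⟨i', c⟩ | ⟨i', c⟩ | w | w
        · have hii : i' = i := hvi
          subst hii
          exact Finset.mem_union_left _ (Finset.mem_image.2 ⟨c, Finset.mem_univ _, rfl⟩)
        · have hii : i' = i := hvi
          subst hii
          exact Finset.mem_union_right _ (Finset.mem_image.2 ⟨c, Finset.mem_univ _, rfl⟩)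
        · exact absurd hm (by rcases w with ⟨j, c⟩; simp [isMainS])
        · exact absurd hm (by rcases w with ⟨j, c⟩; simp [isMainS])
      calc (M.filter fun v => idxS hs v = i).card
          ≤ _ := Finset.card_le_card hsub
        _ ≤ _ + _ := Finset.card_union_le _ _
        _ ≤ α i + (α' i - α i) := by
            gcongr <;> exact (Finset.card_image_le).trans (by simp)
        _ = α' i := Nat.add_sub_cancel' (hαα' i)
  -- column cardinalities
  have hcol : ∀ j : Fin t,
      β j ≤ (Lf.filter fun p => p.2 = j).card ∧
        (Lf.filter fun p => p.2 = j).card ≤ β' j := by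
    intro j
    have hcardeq : (Lf.filter fun p => p.2 = j).card
        = (M.filter fun v => colT ht (f v) = j).card := by
      have hfilt : (Lf.filter fun p => p.2 = j)
          = (M.filter fun v => colT ht (f v) = j).image π := by
        rw [hLfdef, Finset.filter_image]
      rw [hfilt]
      apply Finset.card_image_of_injOn
      intro v hv v' hv' h
      exact hπinj v (Finset.mem_of_mem_filter _ (Finset.mem_coe.1 hv))
        v' (Finset.mem_of_mem_filter _ (Finset.mem_coe.1 hv')) h
    rw [hcardeq]
    set u : Fin s → VS s t α α' β β' := fun i => f.symm (Sum.inl (j, i)) with hudef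
    have hfu : ∀ i, f (u i) = Sum.inl (j, i) := fun i => f.apply_symm_apply _
    have hc1 : (M.filter fun v => colT ht (f v) = j).card
        = (Finset.univ.filter fun i => isMainS (u i)).card := by
      apply Finset.card_bij (fun v _ => idxS hs v)
      · intro v hv
        obtain ⟨hvM, hvj⟩ := Finset.mem_filter.1 hv
        have hfv : f v = Sum.inl (j, idxS hs v) := by rw [hmain v hvM, hvj]
        have huv : u (idxS hs v) = v := by
          simp only [hudef]
          rw [← hfv, f.symm_apply_apply]
        refine Finset.mem_filter.2 ⟨Finset.mem_univ _, ?_⟩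
        rw [huv]; exact ((hMmem v).1 hvM).1
      · intro v hv v' hv' h
        obtain ⟨hvM, hvj⟩ := Finset.mem_filter.1 hv
        obtain ⟨hvM', hvj'⟩ := Finset.mem_filter.1 hv'
        apply f.injective
        rw [hmain v hvM, hmain v' hvM', hvj, hvj', h]
      · intro i hi
        obtain ⟨-, hi⟩ := Finset.mem_filter.1 hi
        refine ⟨u i, ?_, ?_⟩
        · refine Finset.mem_filter.2 ⟨(hMmem _).2 ⟨hi, ?_⟩, ?_⟩
          · rw [hfu i]; trivial
          · rw [hfu i]; rfl
        · have hA := hf (u i)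
          rw [hfu i] at hA
          rcases h : u i with ⟨i', c⟩ | ⟨i', c⟩ | w | w
          · rw [h] at hA
            have h2 : i = i' := hA
            subst h2; rfl
          · rw [h] at hA
            have h2 : i = i' := hA
            subst h2; rfl
          · rw [h] at hi; exact absurd hi (by rcases w with ⟨j', c⟩; simp [isMainS])
          · rw [h] at hi; exact absurd hi (by rcases w with ⟨j', c⟩; simp [isMainS])
    have huinj : Function.Injective u := by
      intro a b h
      have := f.symm.injective h
      simpa using this
    have hc2 : (Finset.univ.filter fun i => isXS (u i)).card ≤ β' j - β j := by
      have hle := Finset.card_le_card_of_injOn u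
        (s := Finset.univ.filter fun i => isXS (u i))
        (t := Finset.univ.image fun c : Fin (β' j - β j) =>
          (Sum.inr (Sum.inr (Sum.inl ⟨j, c⟩)) : VS s t α α' β β'))
        (by
          intro i hi
          obtain ⟨-, hi⟩ := Finset.mem_filter.1 (Finset.mem_coe.1 hi)
          have hA := hf (u i)
          rw [hfu i] at hA
          rcases h : u i with ⟨i', c⟩ | ⟨i', c⟩ | ⟨j', c⟩ | ⟨j', c⟩
          · rw [h] at hi; exact absurd hi (by simp [isXS])
          · rw [h] at hi; exact absurd hi (by simp [isXS])
          · rw [h] at hA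
            have h2 : j = j' := hA
            subst h2
            exact Finset.mem_image.2 ⟨c, Finset.mem_univ _, rfl⟩
          · rw [h] at hi; exact absurd hi (by simp [isXS]))
        (fun a _ b _ h => huinj h)
      calc (Finset.univ.filter fun i => isXS (u i)).card
          ≤ _ := hle
        _ ≤ _ := Finset.card_image_le
        _ = β' j - β j := by simp
    have hc3 : (Finset.univ.filter fun i => isWS (u i)).card ≤ s - β' j := by
      have hle := Finset.card_le_card_of_injOn u
        (s := Finset.univ.filter fun i => isWS (u i))
        (t := Finset.univ.image fun c : Fin (s - β' j) =>
          (Sum.inr (Sum.inr (Sum.inr ⟨j, c⟩)) : VS s t α α' β β'))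
        (by
          intro i hi
          obtain ⟨-, hi⟩ := Finset.mem_filter.1 (Finset.mem_coe.1 hi)
          have hA := hf (u i)
          rw [hfu i] at hA
          rcases h : u i with ⟨i', c⟩ | ⟨i', c⟩ | ⟨j', c⟩ | ⟨j', c⟩
          · rw [h] at hi; exact absurd hi (by simp [isWS])
          · rw [h] at hi; exact absurd hi (by simp [isWS])
          · rw [h] at hi; exact absurd hi (by simp [isWS])
          · rw [h] at hA
            have h2 : j = j' := hA
            subst h2
            exact Finset.mem_image.2 ⟨c, Finset.mem_univ _, rfl⟩)
        (fun a _ b _ h => huinj h)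
      calc (Finset.univ.filter fun i => isWS (u i)).card
          ≤ _ := hle
        _ ≤ _ := Finset.card_image_le
        _ = s - β' j := by simp
    have hc4 : s - β' j ≤ (Finset.univ.filter fun i => isWS (u i)).card := by
      have hw : ∀ c : Fin (s - β' j),
          f (Sum.inr (Sum.inr (Sum.inr ⟨j, c⟩)))
            = Sum.inl (j, rowT hs (f (Sum.inr (Sum.inr (Sum.inr ⟨j, c⟩))))) := by
        intro c
        have hA := hf (Sum.inr (Sum.inr (Sum.inr ⟨j, c⟩)) : VS s t α α' β β')
        rcases h : f (Sum.inr (Sum.inr (Sum.inr ⟨j, c⟩))) with ⟨j', i'⟩ | y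
        · rw [h] at hA
          have h2 : j' = j := hA
          subst h2; rfl
        · rw [h] at hA; exact absurd hA (by simp [Allowed])
      have hle := Finset.card_le_card_of_injOn
        (f := fun c : Fin (s - β' j) =>
          rowT hs (f (Sum.inr (Sum.inr (Sum.inr ⟨j, c⟩)))))
        (s := Finset.univ)
        (t := Finset.univ.filter fun i => isWS (u i))
        (by
          intro c _
          refine Finset.mem_filter.2 ⟨Finset.mem_univ _, ?_⟩
          have huc : u (rowT hs (f (Sum.inr (Sum.inr (Sum.inr ⟨j, c⟩)))))
              = Sum.inr (Sum.inr (Sum.inr ⟨j, c⟩)) := by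
            simp only [hudef]
            rw [← hw c, f.symm_apply_apply]
          rw [huc]; trivial)
        (by
          intro a _ b _ h
          have h2 : f (Sum.inr (Sum.inr (Sum.inr ⟨j, a⟩)) : VS s t α α' β β')
              = f (Sum.inr (Sum.inr (Sum.inr ⟨j, b⟩))) := by
            rw [hw a, hw b]
            exact congrArg (fun r => (Sum.inl (j, r) : VT s t α' β)) h
          have := f.injective h2
          simpa using this)
      simpa using hle
    have hpart : (Finset.univ.filter fun i => isMainS (u i)).card
        + (Finset.univ.filter fun i => isXS (u i)).card
        + (Finset.univ.filter fun i => isWS (u i)).card = s := by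
      have key : ∀ i : Fin s,
          ((if isMainS (u i) then 1 else 0) + (if isXS (u i) then 1 else 0))
            + (if isWS (u i) then 1 else 0) = 1 := by
        intro i
        rcases u i with v | v | v | v <;>
          simp [isMainS, isXS, isWS]
      rw [Finset.card_filter, Finset.card_filter, Finset.card_filter,
        ← Finset.sum_add_distrib, ← Finset.sum_add_distrib]
      rw [Finset.sum_congr rfl (fun i _ => key i)]
      simp
    have hb1 := hββ' j
    have hb2 := hβ's j
    rw [hc1]
    constructor
    · omega
    · omega
  -- assemble
  have hMMDC : IsMMDC α α' β β' Lf := ⟨hrow, hcol⟩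
  calc cost δ L ≤ cost δ Lf := hLmin Lf hMMDC
    _ = ∑ v ∈ M, δ (idxS hs v) (colT ht (f v)) := hcost
    _ = mainWeight δ α α' β β' f := hmw.symm
end

section
/- For every perfect matching f of G' and every i ∈ Fin s, the number of indices j ∈ Fin t such that some vertex of A_i ∪ A'_i (a copy of a_i) is mapped by f to the vertex b_{j,i} is at least α i and at most α' i. -/
/- The bipartite graph `G'` of Rajabi-Alni and Bagheri, for the case
`∑ i, α' i < ∑ j, β j` (compensator set `Y` added to the left side `S`). -/

/-- Left vertex set `V_S`: copies `A_i`, extra copies `A'_i`, dummy sets `X_j`,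
dummy sets `W_j`, and the compensator set `Y`. -/
abbrev VS' (s t : ℕ) (α α' : Fin s → ℕ) (β β' : Fin t → ℕ) : Type :=
  ((i : Fin s) × Fin (α i)) ⊕ ((i : Fin s) × Fin (α' i - α i)) ⊕
    ((j : Fin t) × Fin (β' j - β j)) ⊕ ((j : Fin t) × Fin (s - β' j)) ⊕
    Fin (∑ j, β j - ∑ i, α' i)

/-- Right vertex set `V_T`: the vertices `b_{j,i}`. -/
abbrev VT' (s t : ℕ) : Type := Fin t × Fin s

variable {s t : ℕ}

/-- The allowed edges of `G'`. -/
def Allowed' (α α' : Fin s → ℕ) (β β' : Fin t → ℕ) :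
    VS' s t α α' β β' → VT' s t → Prop
  | Sum.inl ⟨i, _⟩, (_, i') => i' = i                                 -- A_i-copy to b_{j,i}
  | Sum.inr (Sum.inl ⟨i, _⟩), (_, i') => i' = i                       -- A'_i-copy to b_{j,i}
  | Sum.inr (Sum.inr (Sum.inl ⟨j, _⟩)), (j', _) => j' = j             -- X_j to b_{j,i}
  | Sum.inr (Sum.inr (Sum.inr (Sum.inl ⟨j, _⟩))), (j', _) => j' = j   -- W_j to b_{j,i}
  | Sum.inr (Sum.inr (Sum.inr (Sum.inr _))), _ => True                -- Y to every b_{j,i}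

/-- The weights of the edges of `G'`. -/
def weight' (δ : Fin s → Fin t → ℝ) (γ' : ℝ) (α α' : Fin s → ℕ) (β β' : Fin t → ℕ) :
    VS' s t α α' β β' → VT' s t → ℝ
  | Sum.inl ⟨i, _⟩, (j, _) => δ i j
  | Sum.inr (Sum.inl ⟨i, _⟩), (j, _) => δ i j
  | Sum.inr (Sum.inr (Sum.inl _)), _ => γ'
  | Sum.inr (Sum.inr (Sum.inr (Sum.inl _))), _ => 0
  | Sum.inr (Sum.inr (Sum.inr (Sum.inr _))), _ => 0

/-- A perfect matching of `G'`: a bijection `f : V_S → V_T` such that `(v, f v)` is an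
allowed edge for every `v`. -/
def IsPerfectMatching' (α α' : Fin s → ℕ) (β β' : Fin t → ℕ)
    (f : VS' s t α α' β β' ≃ VT' s t) : Prop :=
  ∀ v, Allowed' α α' β β' v (f v)

/-- Total weight of a perfect matching of `G'`. -/
def totalWeight' (δ : Fin s → Fin t → ℝ) (γ' : ℝ) (α α' : Fin s → ℕ) (β β' : Fin t → ℕ)
    (f : VS' s t α α' β β' ≃ VT' s t) : ℝ :=
  ∑ v, weight' δ γ' α α' β β' v (f v)

/-- Main weight of a perfect matching of `G'`: the sum of `δ i j` over those `v` in the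
`A_i`'s and `A'_i`'s with `f v = b_{j,i}`. -/
def mainWeight' (δ : Fin s → Fin t → ℝ) (α α' : Fin s → ℕ) (β β' : Fin t → ℕ)
    (f : VS' s t α α' β β' ≃ VT' s t) : ℝ :=
  (∑ v : (i : Fin s) × Fin (α i),
    if (f (Sum.inl v)).2 = v.1 then δ v.1 (f (Sum.inl v)).1 else 0) +
  (∑ v : (i : Fin s) × Fin (α' i - α i),
    if (f (Sum.inr (Sum.inl v))).2 = v.1 then δ v.1 (f (Sum.inr (Sum.inl v))).1 else 0)

/-- For every perfect matching `f` of `G'` and every `i`, the number of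
indices `j` such that some copy of `aᵢ` (in `A_i ∪ A'_i`) is mapped by `f` to `b_{j,i}`
is at least `α i` and at most `α' i`. -/
theorem demand_capacity_A_satisfied'
    (s t : ℕ) (hs : 0 < s) (ht : 0 < t)
    (δ : Fin s → Fin t → ℝ) (α α' : Fin s → ℕ) (β β' : Fin t → ℕ)
    (hαα' : ∀ i, α i ≤ α' i) (hα't : ∀ i, α' i ≤ t)
    (hββ' : ∀ j, β j ≤ β' j) (hβ's : ∀ j, β' j ≤ s)
    (hbal : ∑ i, α' i < ∑ j, β j)
    (γ' : ℝ) (hγδ : ∀ i j, γ' < δ i j)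
    (f : VS' s t α α' β β' ≃ VT' s t)
    (hf : IsPerfectMatching' α α' β β' f) (i : Fin s) :
    α i ≤ Nat.card {j : Fin t //
        (∃ k, f (Sum.inl ⟨i, k⟩) = (j, i)) ∨
        (∃ k, f (Sum.inr (Sum.inl ⟨i, k⟩)) = (j, i))} ∧
    Nat.card {j : Fin t //
        (∃ k, f (Sum.inl ⟨i, k⟩) = (j, i)) ∨
        (∃ k, f (Sum.inr (Sum.inl ⟨i, k⟩)) = (j, i))} ≤ α' i := by
  classical
  have hcopy1 : ∀ k : Fin (α i), f (Sum.inl ⟨i, k⟩) = ((f (Sum.inl ⟨i, k⟩)).1, i) := by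
    intro k
    have h := hf (Sum.inl ⟨i, k⟩)
    have h2 : (f (Sum.inl ⟨i, k⟩)).2 = i := h
    exact Prod.ext rfl h2
  have hcopy2 : ∀ k : Fin (α' i - α i),
      f (Sum.inr (Sum.inl ⟨i, k⟩)) = ((f (Sum.inr (Sum.inl ⟨i, k⟩))).1, i) := by
    intro k
    have h := hf (Sum.inr (Sum.inl ⟨i, k⟩))
    have h2 : (f (Sum.inr (Sum.inl ⟨i, k⟩))).2 = i := h
    exact Prod.ext rfl h2
  let g : Fin (α i) ⊕ Fin (α' i - α i) → {j : Fin t //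
      (∃ k, f (Sum.inl ⟨i, k⟩) = (j, i)) ∨
      (∃ k, f (Sum.inr (Sum.inl ⟨i, k⟩)) = (j, i))} := fun x =>
    match x with
    | Sum.inl k => ⟨(f (Sum.inl ⟨i, k⟩)).1, Or.inl ⟨k, hcopy1 k⟩⟩
    | Sum.inr k => ⟨(f (Sum.inr (Sum.inl ⟨i, k⟩))).1, Or.inr ⟨k, hcopy2 k⟩⟩
  have hg : Function.Bijective g := by
    constructor
    · rintro (k₁ | k₁) (k₂ | k₂) h
      · have hv : (f (Sum.inl ⟨i, k₁⟩)).1 = (f (Sum.inl ⟨i, k₂⟩)).1 := congrArg Subtype.val h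
        have : f (Sum.inl (⟨i, k₁⟩ : (i : Fin s) × Fin (α i))) = f (Sum.inl ⟨i, k₂⟩) := by
          rw [hcopy1 k₁, hcopy1 k₂, hv]
        have := f.injective this
        simp only [Sum.inl.injEq] at this
        rw [Sigma.ext_iff] at this
        simp at this
        rw [this]
      · exfalso
        have hv : (f (Sum.inl ⟨i, k₁⟩)).1 = (f (Sum.inr (Sum.inl ⟨i, k₂⟩))).1 :=
          congrArg Subtype.val h
        have : f (Sum.inl (⟨i, k₁⟩ : (i : Fin s) × Fin (α i))) =
            f (Sum.inr (Sum.inl ⟨i, k₂⟩)) := by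
          rw [hcopy1 k₁, hcopy2 k₂, hv]
        exact absurd (f.injective this) (by simp)
      · exfalso
        have hv : (f (Sum.inr (Sum.inl ⟨i, k₁⟩))).1 = (f (Sum.inl ⟨i, k₂⟩)).1 :=
          congrArg Subtype.val h
        have : f (Sum.inr (Sum.inl (⟨i, k₁⟩ : (i : Fin s) × Fin (α' i - α i)))) =
            f (Sum.inl ⟨i, k₂⟩) := by
          rw [hcopy2 k₁, hcopy1 k₂, hv]
        exact absurd (f.injective this) (by simp)
      · have hv : (f (Sum.inr (Sum.inl ⟨i, k₁⟩))).1 = (f (Sum.inr (Sum.inl ⟨i, k₂⟩))).1 :=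
          congrArg Subtype.val h
        have : f (Sum.inr (Sum.inl (⟨i, k₁⟩ : (i : Fin s) × Fin (α' i - α i)))) =
            f (Sum.inr (Sum.inl ⟨i, k₂⟩)) := by
          rw [hcopy2 k₁, hcopy2 k₂, hv]
        have := f.injective this
        simp only [Sum.inr.injEq, Sum.inl.injEq] at this
        rw [Sigma.ext_iff] at this
        simp at this
        rw [this]
    · rintro ⟨j, (⟨k, hk⟩ | ⟨k, hk⟩)⟩
      · exact ⟨Sum.inl k, Subtype.ext (by simp only [g]; rw [hk])⟩
      · exact ⟨Sum.inr k, Subtype.ext (by simp only [g]; rw [hk])⟩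
  have hcard : Nat.card {j : Fin t //
      (∃ k, f (Sum.inl ⟨i, k⟩) = (j, i)) ∨
      (∃ k, f (Sum.inr (Sum.inl ⟨i, k⟩)) = (j, i))} = α' i := by
    rw [← Nat.card_congr (Equiv.ofBijective g hg)]
    simp [Nat.add_sub_cancel' (hαα' i)]
  rw [hcard]
  exact ⟨hαα' i, le_refl _⟩
end
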